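/- arXiv:1706.09860 — 3 statements merged into one kernel-verified Lean document; each statement's English description precedes it below -/
import Mathlib

section
/- Let T : ℓ∞ → ℓ∞ be a Dunford-Schwartz operator, x ∈ ℓ_p with 1 ≤ p < ∞, and α > 0. Then the cardinality of the set {s ∈ ℕ : sup_{n ≥ 1} |(1/n) Σ_{k=0}^{n−1} (T^k x)(s)| ≥ α} is at most (2‖x‖_p / α)^p. -/
open Filter Finset Topology

/-- The supremum norm of a real sequence. -/
noncomputable def supNorm (x : ℕ → ℝ) : ℝ := ⨆ n, |x n|

/-- `x` is a bounded sequence (i.e. `x ∈ ℓ∞`). -/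
def IsBdd (x : ℕ → ℝ) : Prop := ∃ C, ∀ n, |x n| ≤ C

/-- The non-increasing rearrangement of a bounded sequence, `0`-indexed:
`(x*)_n = inf over finite F with card F ≤ n of sup_{k ∉ F} |x k|`. -/
noncomputable def rearr (x : ℕ → ℝ) (n : ℕ) : ℝ :=
  sInf { r : ℝ | ∃ F : Finset ℕ, F.card ≤ n ∧ r = ⨆ k : {k : ℕ // k ∉ F}, |x k.1| }

/-- A Dunford–Schwartz operator: a linear operator which is an `ℓ₁`-contraction
and an `ℓ∞`-contraction. -/
def IsDS (T : (ℕ → ℝ) →ₗ[ℝ] (ℕ → ℝ)) : Prop :=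
  (∀ x : ℕ → ℝ, Summable (fun n => |x n|) →
      Summable (fun n => |T x n|) ∧ ∑' n, |T x n| ≤ ∑' n, |x n|) ∧
  (∀ x : ℕ → ℝ, IsBdd x → IsBdd (T x) ∧ supNorm (T x) ≤ supNorm x)

/-- The Cesàro average `A(n,T)(x) = (1/n) ∑_{k=0}^{n-1} T^k x`. -/
noncomputable def cesaro (T : (ℕ → ℝ) →ₗ[ℝ] (ℕ → ℝ)) (n : ℕ) (x : ℕ → ℝ) : ℕ → ℝ :=
  fun s => (∑ k ∈ Finset.range n, (⇑T)^[k] x s) / n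

/-- Membership in `ℓ_p`. -/
def Memlp (p : ℝ) (x : ℕ → ℝ) : Prop := Summable (fun n => |x n| ^ p)

/-- The `ℓ_p` norm. -/
noncomputable def lpNorm (p : ℝ) (x : ℕ → ℝ) : ℝ := (∑' n, |x n| ^ p) ^ (1 / p)

noncomputable def tmat (T : (ℕ → ℝ) →ₗ[ℝ] (ℕ → ℝ)) (s j : ℕ) : ℝ := T (Pi.single j 1) s

lemma single_abs_summable (j : ℕ) : Summable (fun n => |Pi.single j (1:ℝ) n|) := by
  apply summable_of_finite_support
  apply Set.Finite.subset (Set.finite_singleton j)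
  intro n hn
  simp only [Function.mem_support] at hn
  by_contra h
  exact hn (by simp [Pi.single_apply, Ne.symm h, abs_eq_zero])

lemma single_abs_tsum (j : ℕ) : ∑' n, |Pi.single j (1:ℝ) n| = 1 := by
  rw [tsum_eq_single j]
  · simp
  · intro n hn; simp [Pi.single_apply, hn]

lemma col_summable {T} (hT : IsDS T) (j : ℕ) :
    Summable (fun s => |tmat T s j|) := (hT.1 _ (single_abs_summable j)).1

lemma col_tsum {T} (hT : IsDS T) (j : ℕ) : ∑' s, |tmat T s j| ≤ 1 := by
  have := (hT.1 _ (single_abs_summable j)).2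
  rwa [single_abs_tsum j] at this

lemma entry_le_one {T} (hT : IsDS T) (s j : ℕ) : |tmat T s j| ≤ 1 :=
  le_trans (Summable.le_tsum (col_summable hT j) s (fun _ _ => abs_nonneg _)) (col_tsum hT j)

lemma isBdd_bddAbove {u : ℕ → ℝ} (h : IsBdd u) : BddAbove (Set.range fun n => |u n|) := by
  obtain ⟨C, hC⟩ := h
  exact ⟨C, by rintro r ⟨n, rfl⟩; exact hC n⟩

lemma le_supNorm {u : ℕ → ℝ} (h : IsBdd u) (s : ℕ) : |u s| ≤ supNorm u :=
  le_ciSup (isBdd_bddAbove h) s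

lemma row_partial {T} (hT : IsDS T) (s : ℕ) (J : Finset ℕ) :
    ∑ j ∈ J, |tmat T s j| ≤ 1 := by
  set c : ℕ → ℝ := fun j => if tmat T s j < 0 then -1 else 1 with hc
  set w : ℕ → ℝ := fun j => if j ∈ J then c j else 0 with hw
  have habs : ∀ n, |w n| ≤ 1 := by
    intro n
    by_cases hn : n ∈ J
    · simp only [hw, if_pos hn, hc]; split <;> simp
    · simp [hw, hn]
  have hbdd : IsBdd w := ⟨1, habs⟩
  have hsup : supNorm w ≤ 1 := ciSup_le habs
  have hrepr : w = ∑ j ∈ J, c j • (Pi.single j (1:ℝ) : ℕ → ℝ) := by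
    funext n
    simp only [Finset.sum_apply, Pi.smul_apply, Pi.single_apply, smul_eq_mul, mul_ite,
      mul_one, mul_zero, hw]
    rw [Finset.sum_ite_eq J n c]
  have hTw : T w s = ∑ j ∈ J, |tmat T s j| := by
    rw [hrepr, map_sum]
    simp only [map_smul, Finset.sum_apply, Pi.smul_apply, smul_eq_mul]
    apply Finset.sum_congr rfl
    intro j _
    simp only [hc]
    split_ifs with h
    · rw [abs_of_neg h]; simp only [tmat]; ring
    · rw [abs_of_nonneg (not_lt.1 h)]; simp only [tmat]; ring
  calc ∑ j ∈ J, |tmat T s j| = T w s := hTw.symm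
    _ ≤ |T w s| := le_abs_self _
    _ ≤ supNorm (T w) := le_supNorm (hT.2 w hbdd).1 s
    _ ≤ supNorm w := (hT.2 w hbdd).2
    _ ≤ 1 := hsup

lemma row_summable {T} (hT : IsDS T) (s : ℕ) : Summable (fun j => |tmat T s j|) :=
  summable_of_sum_le (fun _ => abs_nonneg _) (row_partial hT s)

lemma row_tsum {T} (hT : IsDS T) (s : ℕ) : ∑' j, |tmat T s j| ≤ 1 :=
  Summable.tsum_le_of_sum_le (row_summable hT s) (row_partial hT s)

lemma term_summable {T} (hT : IsDS T) (s : ℕ) {w : ℕ → ℝ}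
    (hw : Summable (fun j => |w j|)) : Summable (fun j => tmat T s j * w j) := by
  apply Summable.of_abs
  apply Summable.of_nonneg_of_le (fun j => abs_nonneg _) _ hw
  intro j
  rw [abs_mul]
  exact mul_le_of_le_one_left (abs_nonneg _) (entry_le_one hT s j)

lemma T_repr {T} (hT : IsDS T) {w : ℕ → ℝ} (hw : Summable (fun j => |w j|)) (s : ℕ) :
    T w s = ∑' j, tmat T s j * w j := by
  have hsum := term_summable hT s hw
  have h3 : Tendsto (fun m => ∑ j ∈ Finset.range m, tmat T s j * w j) atTop
      (𝓝 (∑' j, tmat T s j * w j)) := hsum.hasSum.tendsto_sum_nat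
  have h4 : ∀ m : ℕ, |T w s - ∑ j ∈ Finset.range m, tmat T s j * w j| ≤
      ∑' j, |w j| - ∑ j ∈ Finset.range m, |w j| := by
    intro m
    set u : ℕ → ℝ := fun j => if j ∈ Finset.range m then 0 else w j with hu
    have hrepr : w - u = ∑ j ∈ Finset.range m, w j • (Pi.single j (1:ℝ) : ℕ → ℝ) := by
      funext n
      simp only [Pi.sub_apply, Finset.sum_apply, Pi.smul_apply, Pi.single_apply,
        smul_eq_mul, mul_ite, mul_one, mul_zero, hu]
      rw [Finset.sum_ite_eq (Finset.range m) n w]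
      split <;> simp
    have hTdiff : T (w - u) s = ∑ j ∈ Finset.range m, tmat T s j * w j := by
      rw [hrepr, map_sum]
      simp only [map_smul, Finset.sum_apply, Pi.smul_apply, smul_eq_mul, tmat]
      exact Finset.sum_congr rfl fun j _ => mul_comm _ _
    have husum : Summable (fun j => |u j|) := by
      apply Summable.of_nonneg_of_le (fun j => abs_nonneg _) _ hw
      intro j; by_cases hj : j < m <;> simp [hu, Finset.mem_range, hj]
    have hutsum : ∑' j, |u j| = ∑' j, |w j| - ∑ j ∈ Finset.range m, |w j| := by
      have hind : Summable ((Finset.range m : Set ℕ).indicator (fun j => |w j|)) :=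
        hw.indicator _
      calc ∑' j, |u j|
          = ∑' j, (|w j| - (Finset.range m : Set ℕ).indicator (fun j => |w j|) j) := by
            apply tsum_congr
            intro j
            by_cases hj : j < m <;>
              simp [hu, Finset.mem_range, hj, Set.indicator_apply, Finset.mem_coe]
        _ = ∑' j, |w j| - ∑' j, (Finset.range m : Set ℕ).indicator (fun j => |w j|) j :=
            Summable.tsum_sub hw hind
        _ = ∑' j, |w j| - ∑ j ∈ Finset.range m, |w j| := by
            congr 1
            rw [tsum_eq_sum (s := Finset.range m)
              (fun b hb => Set.indicator_of_notMem (by simpa using hb) _)]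
            exact Finset.sum_congr rfl fun j hj =>
              Set.indicator_of_mem (by simpa using hj) _
    have key : T w s - ∑ j ∈ Finset.range m, tmat T s j * w j = T u s := by
      rw [← hTdiff]
      have hTT : T w - T (w - u) = T u := by rw [← map_sub]; congr 1; abel
      calc T w s - T (w - u) s = (T w - T (w - u)) s := rfl
        _ = T u s := by rw [hTT]
    rw [key, ← hutsum]
    exact le_trans (Summable.le_tsum (hT.1 u husum).1 s (fun _ _ => abs_nonneg _)) (hT.1 u husum).2
  have h5 : Tendsto (fun m => ∑' j, |w j| - ∑ j ∈ Finset.range m, |w j|) atTop (𝓝 0) := by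
    have := hw.hasSum.tendsto_sum_nat
    have h := (tendsto_const_nhds (x := ∑' j, |w j|) (f := atTop (α := ℕ))).sub this
    simpa using h
  have h6 : Tendsto (fun m => ∑ j ∈ Finset.range m, tmat T s j * w j) atTop (𝓝 (T w s)) := by
    rw [tendsto_iff_dist_tendsto_zero]
    refine squeeze_zero (fun m => dist_nonneg) (fun m => ?_) h5
    rw [Real.dist_eq, abs_sub_comm]
    exact h4 m
  exact (tendsto_nhds_unique h6 h3)
noncomputable def Sop (T : (ℕ → ℝ) →ₗ[ℝ] (ℕ → ℝ)) (u : ℕ → ℝ) : ℕ → ℝ :=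
  fun s => ∑' j, |tmat T s j| * u j

lemma sop_term_summable {T} (hT : IsDS T) (s : ℕ) {u : ℕ → ℝ}
    (hu : Summable (fun j => |u j|)) : Summable (fun j => |tmat T s j| * u j) := by
  apply Summable.of_abs
  apply Summable.of_nonneg_of_le (fun j => abs_nonneg _) _ hu
  intro j
  rw [abs_mul, abs_abs]
  exact mul_le_of_le_one_left (abs_nonneg _) (entry_le_one hT s j)

lemma sop_nonneg {T} {u : ℕ → ℝ} (h : ∀ j, 0 ≤ u j) (s : ℕ) : 0 ≤ Sop T u s :=
  tsum_nonneg fun j => mul_nonneg (abs_nonneg _) (h j)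

lemma sop_mono {T} (hT : IsDS T) {u v : ℕ → ℝ} (hu : Summable (fun j => |u j|))
    (hv : Summable (fun j => |v j|)) (h : ∀ j, u j ≤ v j) (s : ℕ) :
    Sop T u s ≤ Sop T v s :=
  Summable.tsum_le_tsum (fun j => mul_le_mul_of_nonneg_left (h j) (abs_nonneg _))
    (sop_term_summable hT s hu) (sop_term_summable hT s hv)

lemma sop_abs_le {T} (hT : IsDS T) {u : ℕ → ℝ} (hu : Summable (fun j => |u j|)) (s : ℕ) :
    |Sop T u s| ≤ Sop T (fun j => |u j|) s := by
  have h1 := sop_term_summable hT s hu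
  have h2 : Summable (fun j => |tmat T s j| * |u j|) :=
    sop_term_summable hT s (by simpa [abs_abs] using hu)
  rw [abs_le]
  simp only [Sop]
  constructor
  · rw [← tsum_neg]
    refine Summable.tsum_le_tsum (fun j => ?_) h2.neg h1
    rw [neg_mul_eq_mul_neg]
    exact mul_le_mul_of_nonneg_left (neg_abs_le _) (abs_nonneg _)
  · exact Summable.tsum_le_tsum (fun j => mul_le_mul_of_nonneg_left (le_abs_self _) (abs_nonneg _)) h1 h2
lemma T_abs_le {T} (hT : IsDS T) {w : ℕ → ℝ} (hw : Summable (fun j => |w j|)) (s : ℕ) :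
    |T w s| ≤ Sop T (fun j => |w j|) s := by
  rw [T_repr hT hw s]
  have h1 := term_summable hT s hw
  have h2 : Summable (fun j => |tmat T s j| * |w j|) :=
    sop_term_summable hT s (by simpa [abs_abs] using hw)
  rw [abs_le]
  simp only [Sop]
  constructor
  · rw [← tsum_neg]
    refine Summable.tsum_le_tsum (fun j => ?_) h2.neg h1
    rw [← abs_mul]
    exact neg_abs_le _
  · refine Summable.tsum_le_tsum (fun j => ?_) h1 h2
    rw [← abs_mul]
    exact le_abs_self _

lemma sop_l1 {T} (hT : IsDS T) {u : ℕ → ℝ} (h0 : ∀ j, 0 ≤ u j) (hu : Summable u) :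
    Summable (Sop T u) ∧ ∑' s, Sop T u s ≤ ∑' j, u j := by
  have huabs : Summable (fun j => |u j|) := by
    apply hu.congr; intro j; exact (abs_of_nonneg (h0 j)).symm
  have hpartial : ∀ A : Finset ℕ, ∑ s ∈ A, Sop T u s ≤ ∑' j, u j := by
    intro A
    have hswap : ∑ s ∈ A, Sop T u s = ∑' j, ∑ s ∈ A, |tmat T s j| * u j := by
      simp only [Sop]
      exact (Summable.tsum_finsetSum (fun s _ => sop_term_summable hT s huabs)).symm
    rw [hswap]
    have hterm : ∀ j, ∑ s ∈ A, |tmat T s j| * u j ≤ u j := by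
      intro j
      rw [← Finset.sum_mul]
      have hcol : ∑ s ∈ A, |tmat T s j| ≤ 1 :=
        le_trans (Summable.sum_le_tsum A (fun _ _ => abs_nonneg _) (col_summable hT j)) (col_tsum hT j)
      calc (∑ s ∈ A, |tmat T s j|) * u j ≤ 1 * u j :=
            mul_le_mul_of_nonneg_right hcol (h0 j)
        _ = u j := one_mul _
    have hsumm : Summable (fun j => ∑ s ∈ A, |tmat T s j| * u j) := by
      apply Summable.of_nonneg_of_le
        (fun j => Finset.sum_nonneg fun s _ => mul_nonneg (abs_nonneg _) (h0 j)) hterm hu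
    exact Summable.tsum_le_tsum hterm hsumm hu
  have hsummable : Summable (Sop T u) :=
    summable_of_sum_le (fun s => sop_nonneg h0 s) hpartial
  exact ⟨hsummable, Summable.tsum_le_of_sum_le hsummable hpartial⟩

lemma sop_summable_abs {T} (hT : IsDS T) {u : ℕ → ℝ} (hu : Summable (fun j => |u j|)) :
    Summable (fun s => |Sop T u s|) ∧ ∑' s, |Sop T u s| ≤ ∑' j, |u j| := by
  have h := sop_l1 hT (fun j => abs_nonneg (u j)) hu
  have hle : ∀ s, |Sop T u s| ≤ Sop T (fun j => |u j|) s := sop_abs_le hT hu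
  have hs : Summable (fun s => |Sop T u s|) :=
    Summable.of_nonneg_of_le (fun _ => abs_nonneg _) hle h.1
  exact ⟨hs, le_trans (Summable.tsum_le_tsum hle hs h.1) h.2⟩

lemma sop_le_one {T} (hT : IsDS T) {u : ℕ → ℝ} (h0 : ∀ j, 0 ≤ u j) (h1 : ∀ j, u j ≤ 1)
    (hu : Summable (fun j => |u j|)) (s : ℕ) : Sop T u s ≤ 1 := by
  refine le_trans (Summable.tsum_le_tsum (fun j => ?_) (sop_term_summable hT s hu)
    (row_summable hT s)) (row_tsum hT s)
  exact mul_le_of_le_one_right (abs_nonneg _) (h1 j)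

lemma sop_finsum {T} (hT : IsDS T) {ι : Type*} (F : Finset ι) (f : ι → ℕ → ℝ)
    (hf : ∀ i ∈ F, Summable (fun j => |f i j|)) (s : ℕ) :
    Sop T (fun j => ∑ i ∈ F, f i j) s = ∑ i ∈ F, Sop T (f i) s := by
  simp only [Sop]
  rw [← Summable.tsum_finsetSum (fun i hi => sop_term_summable hT s (hf i hi))]
  exact tsum_congr fun j => by rw [Finset.mul_sum]

lemma sop_sub_smul {T} (hT : IsDS T) {u v : ℕ → ℝ} (hu : Summable (fun j => |u j|))
    (hv : Summable (fun j => |v j|)) (β : ℝ) (s : ℕ) :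
    Sop T (fun j => u j - β * v j) s = Sop T u s - β * Sop T v s := by
  simp only [Sop]
  have h1 := sop_term_summable hT s hu
  have h2 := sop_term_summable hT s hv
  calc ∑' j, |tmat T s j| * (u j - β * v j)
      = ∑' j, (|tmat T s j| * u j - β * (|tmat T s j| * v j)) := by
        exact tsum_congr fun j => by ring
    _ = ∑' j, |tmat T s j| * u j - ∑' j, β * (|tmat T s j| * v j) :=
        Summable.tsum_sub h1 (h2.mul_left β)
    _ = ∑' j, |tmat T s j| * u j - β * ∑' j, |tmat T s j| * v j := by
        rw [tsum_mul_left]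
lemma iter_l1 {T} (hT : IsDS T) {u : ℕ → ℝ} (hu : Summable (fun j => |u j|)) (k : ℕ) :
    Summable (fun s => |(Sop T)^[k] u s|) ∧ ∑' s, |(Sop T)^[k] u s| ≤ ∑' j, |u j| := by
  induction k with
  | zero => simp only [Function.iterate_zero_apply]; exact ⟨hu, le_rfl⟩
  | succ k ih =>
    have h := sop_summable_abs hT ih.1
    refine ⟨?_, ?_⟩
    · simpa only [Function.iterate_succ_apply'] using h.1
    · simpa only [Function.iterate_succ_apply'] using h.2.trans ih.2

lemma iter_nonneg {T} {u : ℕ → ℝ} (h0 : ∀ j, 0 ≤ u j) (k : ℕ) (s : ℕ) :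
    0 ≤ (Sop T)^[k] u s := by
  induction k generalizing s with
  | zero => exact h0 s
  | succ k ih =>
    rw [Function.iterate_succ_apply']
    exact sop_nonneg ih s

lemma iter_le_one {T} (hT : IsDS T) {u : ℕ → ℝ} (h0 : ∀ j, 0 ≤ u j) (h1 : ∀ j, u j ≤ 1)
    (hu : Summable (fun j => |u j|)) (k : ℕ) (s : ℕ) : (Sop T)^[k] u s ≤ 1 := by
  induction k generalizing s with
  | zero => exact h1 s
  | succ k ih =>
    rw [Function.iterate_succ_apply']
    exact sop_le_one hT (iter_nonneg h0 k) ih (iter_l1 hT hu k).1 s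

lemma T_iter_l1 {T} (hT : IsDS T) {y : ℕ → ℝ} (hy : Summable (fun j => |y j|)) (k : ℕ) :
    Summable (fun s => |(⇑T)^[k] y s|) ∧ ∑' s, |(⇑T)^[k] y s| ≤ ∑' j, |y j| := by
  induction k with
  | zero => simp only [Function.iterate_zero_apply]; exact ⟨hy, le_rfl⟩
  | succ k ih =>
    have h := hT.1 _ ih.1
    refine ⟨?_, ?_⟩
    · simpa only [Function.iterate_succ_apply'] using h.1
    · simpa only [Function.iterate_succ_apply'] using h.2.trans ih.2

lemma T_iter_abs_le {T} (hT : IsDS T) {y : ℕ → ℝ} (hy : Summable (fun j => |y j|))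
    (k : ℕ) (s : ℕ) : |(⇑T)^[k] y s| ≤ (Sop T)^[k] (fun j => |y j|) s := by
  induction k generalizing s with
  | zero => simp
  | succ k ih =>
    rw [Function.iterate_succ_apply', Function.iterate_succ_apply']
    calc |T ((⇑T)^[k] y) s| ≤ Sop T (fun j => |(⇑T)^[k] y j|) s :=
          T_abs_le hT (T_iter_l1 hT hy k).1 s
      _ ≤ Sop T ((Sop T)^[k] (fun j => |y j|)) s := by
          refine sop_mono (u := fun j => |(⇑T)^[k] y j|) hT ?_ ?_ ih s
          · simpa [abs_abs] using (T_iter_l1 hT hy k).1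
          · exact (iter_l1 hT (by simpa [abs_abs] using hy) k).1
noncomputable def hopfP (T : (ℕ → ℝ) →ₗ[ℝ] (ℕ → ℝ)) (f : ℕ → ℝ) (n : ℕ) (s : ℕ) : ℝ :=
  ∑ k ∈ Finset.range n, (Sop T)^[k] f s

noncomputable def hopfM (T : (ℕ → ℝ) →ₗ[ℝ] (ℕ → ℝ)) (f : ℕ → ℝ) (N : ℕ) (s : ℕ) : ℝ :=
  (Finset.range (N+1)).sup' (Finset.nonempty_range_iff.2 (Nat.succ_ne_zero N))
    (fun n => hopfP T f (n+1) s)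

lemma hopfP_l1 {T} (hT : IsDS T) {f : ℕ → ℝ} (hf : Summable (fun j => |f j|)) (n : ℕ) :
    Summable (fun s => |hopfP T f n s|) := by
  have hsum : Summable (fun s => ∑ k ∈ Finset.range n, |(Sop T)^[k] f s|) :=
    summable_sum (fun k _ => (iter_l1 hT hf k).1)
  apply Summable.of_nonneg_of_le (fun s => abs_nonneg _) _ hsum
  intro s
  exact Finset.abs_sum_le_sum_abs _ _

lemma hopfP_succ {T} (hT : IsDS T) {f : ℕ → ℝ} (hf : Summable (fun j => |f j|)) (n s : ℕ) :
    hopfP T f (n+1) s = f s + Sop T (fun j => hopfP T f n j) s := by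
  have h1 : hopfP T f (n+1) s =
      f s + ∑ k ∈ Finset.range n, Sop T ((Sop T)^[k] f) s := by
    rw [hopfP, Finset.sum_range_succ']
    simp only [Function.iterate_succ_apply', Function.iterate_zero_apply]
    ring
  rw [h1]
  congr 1
  rw [show (fun j => hopfP T f n j) = fun j => ∑ k ∈ Finset.range n, (Sop T)^[k] f j from rfl,
    sop_finsum hT _ _ (fun k _ => (iter_l1 hT hf k).1) s]

lemma hopf {T} (hT : IsDS T) {f : ℕ → ℝ} (hf : Summable (fun j => |f j|)) (N : ℕ) :
    0 ≤ ∑' s, ({s : ℕ | 0 ≤ hopfM T f N s}.indicator f) s := by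
  set M : ℕ → ℝ := hopfM T f N with hM
  set Mp : ℕ → ℝ := fun s => max (M s) 0 with hMpdef
  set E : Set ℕ := {s : ℕ | 0 ≤ M s} with hE
  have hne := Finset.nonempty_range_iff.2 (Nat.succ_ne_zero N)
  have hMp_nonneg : ∀ s, 0 ≤ Mp s := fun s => le_max_right _ _
  have hMp_le : ∀ s, |Mp s| ≤ ∑ n ∈ Finset.range (N+1), |hopfP T f (n+1) s| := by
    intro s
    obtain ⟨n0, hn0, hval⟩ := Finset.exists_mem_eq_sup' hne (fun n => hopfP T f (n+1) s)
    have h1 : Mp s ≤ |hopfP T f (n0+1) s| := by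
      have hMs : M s = hopfP T f (n0+1) s := hval
      show M s ⊔ 0 ≤ |hopfP T f (n0+1) s|
      rw [hMs]
      exact max_le (le_abs_self _) (abs_nonneg _)
    rw [abs_of_nonneg (hMp_nonneg s)]
    exact h1.trans (Finset.single_le_sum (f := fun n => |hopfP T f (n+1) s|)
      (fun n _ => abs_nonneg _) hn0)
  have hPsum : Summable (fun s => ∑ n ∈ Finset.range (N+1), |hopfP T f (n+1) s|) :=
    summable_sum (fun n _ => hopfP_l1 hT hf (n+1))
  have hMp_l1 : Summable (fun s => |Mp s|) :=
    Summable.of_nonneg_of_le (fun _ => abs_nonneg _) hMp_le hPsum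
  have hMp_summ : Summable Mp := hMp_l1.of_abs
  have hP_le_Mp : ∀ n ∈ Finset.range (N+1), ∀ j, hopfP T f n j ≤ Mp j := by
    intro n hn j
    match n with
    | 0 => simpa [hopfP] using hMp_nonneg j
    | (m+1) =>
      have hm : m ∈ Finset.range (N+1) := by
        simp only [Finset.mem_range] at hn ⊢; omega
      have : hopfP T f (m+1) j ≤ M j := Finset.le_sup' (fun n => hopfP T f (n+1) j) hm
      exact this.trans (le_max_left _ _)
  have hSopMp := sop_l1 hT hMp_nonneg hMp_summ
  have key : ∀ s, M s ≤ f s + Sop T Mp s := by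
    intro s
    rw [hM, hopfM]
    apply Finset.sup'_le
    intro n hn
    rw [hopfP_succ hT hf n s]
    have hmono : Sop T (fun j => hopfP T f n j) s ≤ Sop T Mp s :=
      sop_mono hT (hopfP_l1 hT hf n) hMp_l1 (hP_le_Mp n hn) s
    linarith
  have hind : ∀ s, E.indicator (fun s => Mp s - Sop T Mp s) s ≤ E.indicator f s := by
    intro s
    by_cases hs : s ∈ E
    · rw [Set.indicator_of_mem hs, Set.indicator_of_mem hs]
      have h0 : 0 ≤ M s := hs
      have hMpM : Mp s = M s := max_eq_left h0
      have := key s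
      rw [hMpM]
      linarith
    · rw [Set.indicator_of_notMem hs, Set.indicator_of_notMem hs]
  have h1 : Summable (E.indicator f) := hf.of_abs.indicator E
  have h2 : Summable (E.indicator fun s => Mp s - Sop T Mp s) :=
    (hMp_summ.sub hSopMp.1).indicator E
  have step1 : ∑' s, E.indicator (fun s => Mp s - Sop T Mp s) s ≤
      ∑' s, E.indicator f s := Summable.tsum_le_tsum hind h2 h1
  have hindsub : E.indicator (fun s => Mp s - Sop T Mp s) =
      fun s => E.indicator Mp s - E.indicator (Sop T Mp) s := by
    funext s
    by_cases hs : s ∈ E <;> simp [Set.indicator_of_mem, Set.indicator_of_notMem, hs]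
  have hindMp : E.indicator Mp = Mp := by
    funext s
    by_cases hs : s ∈ E
    · rw [Set.indicator_of_mem hs]
    · rw [Set.indicator_of_notMem hs]
      have : M s < 0 := lt_of_not_ge hs
      simp [hMpdef, le_of_lt this]
  have step2 : ∑' s, E.indicator (fun s => Mp s - Sop T Mp s) s =
      ∑' s, Mp s - ∑' s, E.indicator (Sop T Mp) s := by
    rw [hindsub, Summable.tsum_sub (hindMp ▸ hMp_summ.indicator E) (hSopMp.1.indicator E), hindMp]
  have step3 : ∑' s, E.indicator (Sop T Mp) s ≤ ∑' s, Sop T Mp s := by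
    refine Summable.tsum_le_tsum (fun s => ?_) (hSopMp.1.indicator E) hSopMp.1
    exact Set.indicator_le_self' (fun s _ => sop_nonneg hMp_nonneg s) s
  have step4 : ∑' s, Sop T Mp s ≤ ∑' s, Mp s := hSopMp.2
  linarith
lemma iter_sub {T} (hT : IsDS T) {u v : ℕ → ℝ} (hu : Summable (fun j => |u j|))
    (hv : Summable (fun j => |v j|)) (β : ℝ) (k s : ℕ) :
    (Sop T)^[k] (fun j => u j - β * v j) s = (Sop T)^[k] u s - β * (Sop T)^[k] v s := by
  induction k generalizing s with
  | zero => simp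
  | succ k ih =>
    simp only [Function.iterate_succ_apply']
    have hcong : (Sop T)^[k] (fun j => u j - β * v j) =
        fun j => (Sop T)^[k] u j - β * (Sop T)^[k] v j := funext fun j => ih j
    rw [hcong]
    exact sop_sub_smul hT (iter_l1 hT hu k).1 (iter_l1 hT hv k).1 β s

lemma sub_smul_l1 {u v : ℕ → ℝ} (hu : Summable (fun j => |u j|))
    (hv : Summable (fun j => |v j|)) (β : ℝ) :
    Summable (fun j => |u j - β * v j|) := by
  apply Summable.of_nonneg_of_le (fun j => abs_nonneg _) (fun j => ?_)
    (hu.add (hv.mul_left |β|))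
  calc |u j - β * v j| ≤ |u j| + |β * v j| := abs_sub _ _
    _ = |u j| + |β| * |v j| := by rw [abs_mul]

lemma weak11 {T} (hT : IsDS T) {g : ℕ → ℝ} (hg0 : ∀ j, 0 ≤ g j) (hg : Summable g)
    {β : ℝ} (hβ : 0 < β) (F : Finset ℕ)
    (hF : ∀ s ∈ F, ∃ n : ℕ, β * (n+1) ≤ ∑ k ∈ Finset.range (n+1), (Sop T)^[k] g s) :
    (F.card : ℝ) * β ≤ ∑' j, g j := by
  classical
  set χ : ℕ → ℝ := fun j => if j ∈ F then (1:ℝ) else 0 with hχ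
  have hχ0 : ∀ j, 0 ≤ χ j := fun j => by simp only [hχ]; split <;> norm_num
  have hχ1 : ∀ j, χ j ≤ 1 := fun j => by simp only [hχ]; split <;> norm_num
  have hχsum : Summable χ := summable_of_finite_support (by
    apply Set.Finite.subset F.finite_toSet
    intro j hj
    simp only [Function.mem_support, hχ] at hj
    by_contra h
    exact hj (if_neg h))
  have hχabs : Summable (fun j => |χ j|) := by
    apply hχsum.congr; intro j; exact (abs_of_nonneg (hχ0 j)).symm
  have hgabs : Summable (fun j => |g j|) := by
    apply hg.congr; intro j; exact (abs_of_nonneg (hg0 j)).symm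
  set f : ℕ → ℝ := fun j => g j - β * χ j with hf
  have hfabs : Summable (fun j => |f j|) := sub_smul_l1 hgabs hχabs β
  -- choose witnesses
  have hsel : ∀ s : ℕ, ∃ n : ℕ, s ∈ F → β * (n+1) ≤ ∑ k ∈ Finset.range (n+1), (Sop T)^[k] g s := by
    intro s
    by_cases hs : s ∈ F
    · obtain ⟨n, hn⟩ := hF s hs
      exact ⟨n, fun _ => hn⟩
    · exact ⟨0, fun hs' => absurd hs' hs⟩
  choose nsel hnsel using hsel
  set N : ℕ := F.sup nsel with hN
  have hFE : ∀ s ∈ F, 0 ≤ hopfM T f N s := by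
    intro s hs
    have hn := hnsel s hs
    set n := nsel s with hnd
    have hnN : n ≤ N := Finset.le_sup hs
    have hPg : β * (n+1) ≤ hopfP T g (n+1) s := hn
    have hPχ : hopfP T χ (n+1) s ≤ (n+1 : ℝ) := by
      rw [hopfP]
      calc ∑ k ∈ Finset.range (n+1), (Sop T)^[k] χ s
          ≤ ∑ _k ∈ Finset.range (n+1), (1:ℝ) :=
            Finset.sum_le_sum (fun k _ => iter_le_one hT hχ0 hχ1 hχabs k s)
        _ = (n+1 : ℝ) := by simp
    have hPf : 0 ≤ hopfP T f (n+1) s := by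
      have hsplit : hopfP T f (n+1) s = hopfP T g (n+1) s - β * hopfP T χ (n+1) s := by
        have h1 : ∀ k ∈ Finset.range (n+1),
            (Sop T)^[k] f s = (Sop T)^[k] g s - β * (Sop T)^[k] χ s :=
          fun k _ => iter_sub hT hgabs hχabs β k s
        simp only [hopfP]
        rw [Finset.sum_congr rfl h1, Finset.sum_sub_distrib, ← Finset.mul_sum]
      rw [hsplit]
      have : β * hopfP T χ (n+1) s ≤ β * (n+1 : ℝ) :=
        mul_le_mul_of_nonneg_left hPχ hβ.le
      linarith
    refine hPf.trans ?_
    rw [hopfM]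
    exact Finset.le_sup' (fun m => hopfP T f (m+1) s) (Finset.mem_range.2 (by omega))
  set E : Set ℕ := {s : ℕ | 0 ≤ hopfM T f N s} with hE
  have hhopf := hopf hT hfabs N
  have hindχ : E.indicator χ = χ := by
    funext s
    by_cases hs : s ∈ E
    · rw [Set.indicator_of_mem hs]
    · rw [Set.indicator_of_notMem hs]
      have hsF : s ∉ F := fun h => hs (hFE s h)
      simp [hχ, hsF]
  have hindf : E.indicator f = fun s => E.indicator g s - β * χ s := by
    funext s
    by_cases hs : s ∈ E
    · rw [Set.indicator_of_mem hs, Set.indicator_of_mem hs]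
    · rw [Set.indicator_of_notMem hs, Set.indicator_of_notMem hs]
      have hsF : s ∉ F := fun h => hs (hFE s h)
      simp [hχ, hsF]
  have htsum : ∑' s, E.indicator f s = ∑' s, E.indicator g s - β * ∑' s, χ s := by
    rw [hindf, Summable.tsum_sub (hg.indicator E) (hχsum.mul_left β), tsum_mul_left]
  have hχcard : ∑' s, χ s = (F.card : ℝ) := by
    have h1 : ∑' s, χ s = ∑ b ∈ F, χ b :=
      tsum_eq_sum (fun b hb => by simp [hχ, hb])
    have h2 : ∑ b ∈ F, χ b = ∑ b ∈ F, (1:ℝ) :=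
      Finset.sum_congr rfl fun b hb => by simp [hχ, hb]
    rw [h1, h2]
    simp
  have hindg : ∑' s, E.indicator g s ≤ ∑' j, g j :=
    Summable.tsum_le_tsum (fun s => Set.indicator_le_self' (fun j _ => hg0 j) s)
      (hg.indicator E) hg
  rw [htsum, hχcard] at hhopf
  linarith

lemma T_iter_add (T : (ℕ → ℝ) →ₗ[ℝ] (ℕ → ℝ)) (y z : ℕ → ℝ) (k : ℕ) :
    (⇑T)^[k] (y + z) = (⇑T)^[k] y + (⇑T)^[k] z := by
  induction k with
  | zero => rfl
  | succ k ih =>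
    simp only [Function.iterate_succ_apply', ih, map_add]


/-- Maximal ergodic estimate: for a Dunford–Schwartz operator `T`, `x ∈ ℓ_p`
(`1 ≤ p < ∞`) and `α > 0`, the set where the ergodic maximal function is `≥ α`
has cardinality at most `(2‖x‖_p/α)^p`. -/
theorem stmt4 (T : (ℕ → ℝ) →ₗ[ℝ] (ℕ → ℝ)) (hT : IsDS T)
    (p : ℝ) (hp : 1 ≤ p) (x : ℕ → ℝ) (hx : Memlp p x) (α : ℝ) (hα : 0 < α) :
    {s : ℕ | α ≤ ⨆ n : ℕ, |cesaro T (n + 1) x s|}.Finite ∧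
    ({s : ℕ | α ≤ ⨆ n : ℕ, |cesaro T (n + 1) x s|}.ncard : ℝ) ≤
      (2 * lpNorm p x / α) ^ p := by
  classical
  have hp0 : 0 < p := lt_of_lt_of_le one_pos hp
  have hxsum : Summable (fun n => |x n| ^ p) := hx
  set β : ℝ := α / 2 with hβdef
  have hβ : 0 < β := by positivity
  set A : ℝ := ∑' n, |x n| ^ p with hA
  have hA0 : 0 ≤ A := tsum_nonneg fun n => Real.rpow_nonneg (abs_nonneg _) p
  set y : ℕ → ℝ := fun j => if β < |x j| then x j else 0 with hy
  set z : ℕ → ℝ := fun j => if β < |x j| then 0 else x j with hz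
  have hxyz : x = y + z := funext fun j => by
    by_cases h : β < |x j| <;> simp [hy, hz, h]
  set g : ℕ → ℝ := fun j => |y j| with hg
  have hg0 : ∀ j, 0 ≤ g j := fun j => abs_nonneg _
  have hβp1 : (0:ℝ) < β ^ (p-1) := Real.rpow_pos_of_pos hβ _
  have hyle : ∀ j, g j ≤ |x j| ^ p / β ^ (p - 1) := by
    intro j
    by_cases h : β < |x j|
    · have hxj : 0 < |x j| := lt_trans hβ h
      have hgj : g j = |x j| := by simp [hg, hy, if_pos h, abs_of_nonneg, abs_abs]
      rw [hgj, le_div_iff₀ hβp1]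
      have hstep : β ^ (p-1) ≤ |x j| ^ (p-1) :=
        Real.rpow_le_rpow hβ.le h.le (by linarith)
      have hxp : |x j| ^ p = |x j| * |x j| ^ (p-1) := by
        rw [show p = 1 + (p-1) by ring, Real.rpow_add hxj, Real.rpow_one]
        ring_nf
      rw [hxp]
      exact mul_le_mul_of_nonneg_left hstep (abs_nonneg _)
    · have : g j = 0 := by simp [hg, hy, h]
      rw [this]
      positivity
  have hgsum : Summable g := Summable.of_nonneg_of_le hg0 hyle (hxsum.div_const _)
  have hgabs : Summable (fun j => |y j|) := hgsum
  have htsumg : ∑' j, g j ≤ A / β ^ (p-1) := by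
    calc ∑' j, g j ≤ ∑' j, |x j| ^ p / β ^ (p-1) :=
          Summable.tsum_le_tsum hyle hgsum (hxsum.div_const _)
      _ = A / β ^ (p-1) := by rw [tsum_div_const]
  have hzb : ∀ j, |z j| ≤ β := by
    intro j
    by_cases h : β < |x j|
    · simp [hz, h, hβ.le]
    · simpa [hz, h] using not_lt.1 h
  have hzbdd : IsBdd z := ⟨β, hzb⟩
  have hziter : ∀ k, IsBdd ((⇑T)^[k] z) ∧ supNorm ((⇑T)^[k] z) ≤ β := by
    intro k
    induction k with
    | zero => exact ⟨hzbdd, ciSup_le hzb⟩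
    | succ k ih =>
      rw [Function.iterate_succ_apply']
      exact ⟨(hT.2 _ ih.1).1, le_trans (hT.2 _ ih.1).2 ih.2⟩
  have hziter_pt : ∀ k s, |(⇑T)^[k] z s| ≤ β := fun k s =>
    (le_supNorm (hziter k).1 s).trans (hziter k).2
  have hcast : ∀ n : ℕ, ((n+1 : ℕ) : ℝ) = (n : ℝ) + 1 := fun n => by push_cast; ring
  have hnpos : ∀ n : ℕ, (0:ℝ) < ((n+1 : ℕ) : ℝ) := fun n => by positivity
  have hAz : ∀ n s, |cesaro T (n+1) z s| ≤ β := by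
    intro n s
    rw [cesaro, abs_div, abs_of_nonneg (hnpos n).le, div_le_iff₀ (hnpos n)]
    calc |∑ k ∈ Finset.range (n+1), (⇑T)^[k] z s|
        ≤ ∑ k ∈ Finset.range (n+1), |(⇑T)^[k] z s| := Finset.abs_sum_le_sum_abs _ _
      _ ≤ ∑ _k ∈ Finset.range (n+1), β := Finset.sum_le_sum fun k _ => hziter_pt k s
      _ = β * ((n+1 : ℕ) : ℝ) := by
          rw [Finset.sum_const, Finset.card_range, nsmul_eq_mul, mul_comm]
  have hyiter_pt : ∀ k s, |(⇑T)^[k] y s| ≤ ∑' j, g j := by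
    intro k s
    have h1 := T_iter_l1 hT hgabs k
    exact le_trans (Summable.le_tsum h1.1 s fun _ _ => abs_nonneg _) h1.2
  have hAy_b : ∀ s n, |cesaro T (n+1) y s| ≤ ∑' j, g j := by
    intro s n
    rw [cesaro, abs_div, abs_of_nonneg (hnpos n).le, div_le_iff₀ (hnpos n)]
    calc |∑ k ∈ Finset.range (n+1), (⇑T)^[k] y s|
        ≤ ∑ k ∈ Finset.range (n+1), |(⇑T)^[k] y s| := Finset.abs_sum_le_sum_abs _ _
      _ ≤ ∑ _k ∈ Finset.range (n+1), ∑' j, g j :=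
          Finset.sum_le_sum fun k _ => hyiter_pt k s
      _ = (∑' j, g j) * ((n+1 : ℕ) : ℝ) := by
          rw [Finset.sum_const, Finset.card_range, nsmul_eq_mul, mul_comm]
  have hbddy : ∀ s, BddAbove (Set.range fun n : ℕ => |cesaro T (n+1) y s|) := fun s =>
    ⟨∑' j, g j, by rintro r ⟨n, rfl⟩; exact hAy_b s n⟩
  have hsplit : ∀ n s, cesaro T n x s = cesaro T n y s + cesaro T n z s := by
    intro n s
    simp only [cesaro]
    rw [← add_div, ← Finset.sum_add_distrib]
    congr 1
    refine Finset.sum_congr rfl fun k _ => ?_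
    rw [hxyz, T_iter_add]
    rfl
  set Eset : Set ℕ := {s : ℕ | α ≤ ⨆ n : ℕ, |cesaro T (n + 1) x s|} with hEset
  have hEy : ∀ s ∈ Eset, β ≤ ⨆ n : ℕ, |cesaro T (n+1) y s| := by
    intro s hs
    have h1 : (⨆ n : ℕ, |cesaro T (n+1) x s|) ≤ (⨆ n : ℕ, |cesaro T (n+1) y s|) + β := by
      refine ciSup_le fun n => ?_
      calc |cesaro T (n+1) x s| ≤ |cesaro T (n+1) y s| + |cesaro T (n+1) z s| := by
            rw [hsplit]; exact abs_add_le _ _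
        _ ≤ (⨆ n : ℕ, |cesaro T (n+1) y s|) + β :=
            add_le_add (le_ciSup (hbddy s) n) (hAz n s)
    have h2 : α ≤ (⨆ n : ℕ, |cesaro T (n+1) y s|) + β := le_trans hs h1
    have hαβ : α = β + β := by rw [hβdef]; ring
    linarith
  have hkey : ∀ s ∈ Eset, ∀ ε : ℝ, 0 < ε →
      ∃ n : ℕ, (β - ε) * (n+1) ≤ ∑ k ∈ Finset.range (n+1), (Sop T)^[k] g s := by
    intro s hs ε hε
    have h1 : β - ε < ⨆ n : ℕ, |cesaro T (n+1) y s| :=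
      lt_of_lt_of_le (by linarith) (hEy s hs)
    obtain ⟨n, hn⟩ := exists_lt_of_lt_ciSup h1
    refine ⟨n, ?_⟩
    have h2 : |cesaro T (n+1) y s| ≤ (∑ k ∈ Finset.range (n+1), (Sop T)^[k] g s) / ((n+1:ℕ):ℝ) := by
      rw [cesaro, abs_div, abs_of_nonneg (hnpos n).le, div_le_div_iff_of_pos_right (hnpos n)]
      calc |∑ k ∈ Finset.range (n+1), (⇑T)^[k] y s|
          ≤ ∑ k ∈ Finset.range (n+1), |(⇑T)^[k] y s| := Finset.abs_sum_le_sum_abs _ _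
        _ ≤ ∑ k ∈ Finset.range (n+1), (Sop T)^[k] g s :=
            Finset.sum_le_sum fun k _ => T_iter_abs_le hT hgabs k s
    have h3 : β - ε < (∑ k ∈ Finset.range (n+1), (Sop T)^[k] g s) / ((n+1:ℕ):ℝ) :=
      lt_of_lt_of_le hn h2
    rw [lt_div_iff₀ (hnpos n)] at h3
    calc (β - ε) * ((n:ℝ)+1) = (β - ε) * ((n+1:ℕ):ℝ) := by rw [hcast n]
      _ ≤ _ := h3.le
  have hcardβ : ∀ F : Finset ℕ, ↑F ⊆ Eset → (F.card : ℝ) * β ≤ ∑' j, g j := by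
    intro F hFE
    refine le_of_forall_pos_le_add fun δ hδ => ?_
    set ε : ℝ := min (β/2) (δ / (F.card + 1)) with hεd
    have hε0 : 0 < ε := lt_min (by linarith) (div_pos hδ (Nat.cast_add_one_pos _))
    have hεβ : 0 < β - ε := by
      have := min_le_left (β/2) (δ / (F.card + 1))
      have h4 : ε ≤ β/2 := this
      linarith
    have h1 : (F.card : ℝ) * (β - ε) ≤ ∑' j, g j := by
      refine weak11 hT hg0 hgsum hεβ F fun s hsF => ?_
      exact hkey s (hFE hsF) ε hε0
    have h2 : (F.card : ℝ) * ε ≤ δ := by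
      have h3 : ε ≤ δ / (F.card + 1) := min_le_right _ _
      calc (F.card : ℝ) * ε ≤ (F.card : ℝ) * (δ / (F.card+1)) :=
            mul_le_mul_of_nonneg_left h3 (Nat.cast_nonneg _)
        _ ≤ ((F.card : ℝ)+1) * (δ / (F.card+1)) :=
            mul_le_mul_of_nonneg_right (by linarith) (div_pos hδ (Nat.cast_add_one_pos _)).le
        _ = δ := mul_div_cancel₀ _ (Nat.cast_add_one_pos _).ne'
    have h4 : (F.card : ℝ) * (β - ε) = F.card * β - F.card * ε := by ring
    linarith
  have hfin : Eset.Finite := by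
    by_contra hinf
    have hinf' : Eset.Infinite := hinf
    obtain ⟨F, hFsub, hFcard⟩ :=
      hinf'.exists_subset_card_eq (Nat.floor ((∑' j, g j) / β) + 1)
    have h1 := hcardβ F hFsub
    rw [hFcard] at h1
    have h2 : ((∑' j, g j) / β) < ((Nat.floor ((∑' j, g j) / β) : ℝ) + 1) :=
      Nat.lt_floor_add_one _
    have h3 : ((Nat.floor ((∑' j, g j) / β) + 1 : ℕ) : ℝ) ≤ (∑' j, g j) / β :=
      (le_div_iff₀ hβ).2 h1
    push_cast at h3
    linarith
  refine ⟨hfin, ?_⟩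
  have hFcard : ((hfin.toFinset).card : ℝ) * β ≤ ∑' j, g j :=
    hcardβ hfin.toFinset (by simp)
  have hncard : (Eset.ncard : ℝ) * β ≤ ∑' j, g j := by
    rwa [Set.ncard_eq_toFinset_card Eset hfin]
  have hchain : (Eset.ncard : ℝ) * β ≤ A / β ^ (p-1) := le_trans hncard htsumg
  have hrhs : (2 * lpNorm p x / α) ^ p = A / β ^ p := by
    have hl : lpNorm p x = A ^ (1/p) := by rw [lpNorm, ← hA]
    have h2 : 2 * lpNorm p x / α = A ^ (1/p) / β := by
      rw [hl, hβdef]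
      field_simp
    rw [h2, Real.div_rpow (Real.rpow_nonneg hA0 _) hβ.le, ← Real.rpow_mul hA0,
      one_div_mul_cancel (ne_of_gt hp0), Real.rpow_one]
  rw [hrhs]
  have hβp : A / β ^ p = (A / β ^ (p-1)) / β := by
    rw [div_div]
    congr 1
    rw [show β ^ p = β ^ ((p-1)+1) from by congr 1; ring, Real.rpow_add hβ, Real.rpow_one]
  rw [hβp, le_div_iff₀ hβ]
  exact hchain
end

section
/- If T : ℓ∞ → ℓ∞ is a Dunford-Schwartz operator and E is a fully symmetric sequence space, then T(E) ⊆ E and ‖T‖_{E→E} ≤ 1. -/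
open Filter Finset Topology

/-- A fully symmetric sequence space: a nonzero linear subspace of `ℓ∞` with a complete
norm `N` such that Hardy–Littlewood–Pólya majorization `x ≺ y`, `y ∈ E`, `x ∈ ℓ∞` imply
`x ∈ E` and `N x ≤ N y`. -/
structure FullySymmSeqSpace where
  carrier : Submodule ℝ (ℕ → ℝ)
  nontrivial : carrier ≠ ⊥
  bdd : ∀ x ∈ carrier, IsBdd x
  N : (ℕ → ℝ) → ℝ
  N_zero : N 0 = 0
  N_pos : ∀ x ∈ carrier, x ≠ 0 → 0 < N x
  N_add : ∀ x ∈ carrier, ∀ y ∈ carrier, N (x + y) ≤ N x + N y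
  N_smul : ∀ (c : ℝ), ∀ x ∈ carrier, N (c • x) = |c| * N x
  complete : ∀ f : ℕ → (ℕ → ℝ), (∀ k, f k ∈ carrier) →
    (∀ ε > 0, ∃ K, ∀ m ≥ K, ∀ n ≥ K, N (f m - f n) < ε) →
    ∃ x ∈ carrier, Filter.Tendsto (fun k => N (f k - x)) Filter.atTop (nhds 0)
  fullySymm : ∀ y ∈ carrier, ∀ x : ℕ → ℝ, IsBdd x →
    (∀ k, ∑ n ∈ Finset.range (k + 1), rearr x n ≤ ∑ n ∈ Finset.range (k + 1), rearr y n) →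
    x ∈ carrier ∧ N x ≤ N y

section lems
variable {x a b : ℕ → ℝ}

lemma bddAbove_compl (hx : IsBdd x) (F : Finset ℕ) :
    BddAbove (Set.range fun k : {k : ℕ // k ∉ F} => |x k.1|) := by
  obtain ⟨C, hC⟩ := hx
  exact ⟨C, by rintro r ⟨k, rfl⟩; exact hC k.1⟩

instance compl_nonempty (F : Finset ℕ) : Nonempty {k : ℕ // k ∉ F} := by
  obtain ⟨k, hk⟩ := Infinite.exists_notMem_finset F
  exact ⟨⟨k, hk⟩⟩

lemma sup_compl_nonneg (hx : IsBdd x) (F : Finset ℕ) :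
    0 ≤ ⨆ k : {k : ℕ // k ∉ F}, |x k.1| := by
  obtain ⟨k⟩ := compl_nonempty F
  exact le_trans (abs_nonneg _) (le_ciSup (bddAbove_compl hx F) k)

lemma rearr_set_nonempty (x : ℕ → ℝ) (n : ℕ) :
    { r : ℝ | ∃ F : Finset ℕ, F.card ≤ n ∧ r = ⨆ k : {k : ℕ // k ∉ F}, |x k.1| }.Nonempty :=
  ⟨_, ∅, by simp, rfl⟩

lemma rearr_set_bddBelow (hx : IsBdd x) (n : ℕ) :
    BddBelow { r : ℝ | ∃ F : Finset ℕ, F.card ≤ n ∧ r = ⨆ k : {k : ℕ // k ∉ F}, |x k.1| } := by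
  refine ⟨0, ?_⟩
  rintro r ⟨F, hF, rfl⟩
  exact sup_compl_nonneg hx F

lemma rearr_nonneg (hx : IsBdd x) (n : ℕ) : 0 ≤ rearr x n :=
  le_csInf (rearr_set_nonempty x n) (by rintro r ⟨F, hF, rfl⟩; exact sup_compl_nonneg hx F)

lemma rearr_le_sup (hx : IsBdd x) {n : ℕ} {F : Finset ℕ} (hF : F.card ≤ n) :
    rearr x n ≤ ⨆ k : {k : ℕ // k ∉ F}, |x k.1| :=
  csInf_le (rearr_set_bddBelow hx n) ⟨F, hF, rfl⟩

lemma rearr_antitone (hx : IsBdd x) : Antitone (rearr x) := by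
  intro m n hmn
  exact le_csInf (rearr_set_nonempty x m)
    (by rintro r ⟨F, hF, rfl⟩; exact rearr_le_sup hx (hF.trans hmn))

lemma le_rearr (hx : IsBdd x) {c : ℝ} {n : ℕ}
    (h : ∀ F : Finset ℕ, F.card ≤ n → ∃ k ∉ F, c ≤ |x k|) : c ≤ rearr x n := by
  refine le_csInf (rearr_set_nonempty x n) ?_
  rintro r ⟨F, hF, rfl⟩
  obtain ⟨k, hk, hck⟩ := h F hF
  exact hck.trans (le_ciSup (bddAbove_compl hx F) ⟨k, hk⟩)

/-- Subadditivity: `rearr (a+b) n ≤ rearr a n + supNorm b`. -/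
lemma le_supNorm_s5 (hb : IsBdd b) (m : ℕ) : |b m| ≤ supNorm b := by
  obtain ⟨C, hC⟩ := hb
  exact le_ciSup (⟨C, by rintro r ⟨m, rfl⟩; exact hC m⟩ : BddAbove (Set.range fun n => |b n|)) m

lemma rearr_add_le (ha : IsBdd a) (hb : IsBdd b) (n : ℕ) :
    rearr (a + b) n ≤ rearr a n + supNorm b := by
  have hab : IsBdd (a + b) := by
    obtain ⟨C, hC⟩ := ha; obtain ⟨D, hD⟩ := hb
    exact ⟨C + D, fun k => (abs_add_le _ _).trans (add_le_add (hC k) (hD k))⟩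
  rw [← sub_le_iff_le_add]
  refine le_csInf (rearr_set_nonempty a n) ?_
  rintro r ⟨F, hF, rfl⟩
  rw [sub_le_iff_le_add]
  refine (rearr_le_sup hab hF).trans ?_
  refine ciSup_le fun k => ?_
  have h1 : |a k.1| ≤ ⨆ k : {k : ℕ // k ∉ F}, |a k.1| := le_ciSup (bddAbove_compl ha F) k
  have h2 : |b k.1| ≤ supNorm b := le_supNorm_s5 hb k.1
  calc |(a + b) k.1| ≤ |a k.1| + |b k.1| := abs_add_le _ _
    _ ≤ _ := add_le_add h1 h2

/-- Sum over any finset is bounded by sum of top rearranged values. -/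
lemma sum_abs_le_sum_rearr (hx : IsBdd x) (S : Finset ℕ) :
    ∑ s ∈ S, |x s| ≤ ∑ n ∈ Finset.range S.card, rearr x n := by
  suffices h : ∀ j (S : Finset ℕ), S.card = j →
      ∑ s ∈ S, |x s| ≤ ∑ n ∈ Finset.range j, rearr x n by
    exact h S.card S rfl
  intro j
  induction j with
  | zero => intro S hj; simp [Finset.card_eq_zero.mp hj]
  | succ j ih =>
    intro S hj
    have hSne : S.Nonempty := Finset.card_pos.mp (by omega)
    obtain ⟨s₀, hs₀S, hs₀⟩ := S.exists_min_image (fun s => |x s|) hSne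
    have hcard : (S.erase s₀).card = j := by rw [Finset.card_erase_of_mem hs₀S, hj]; omega
    have hmin : |x s₀| ≤ rearr x j := by
      refine le_rearr hx fun F hF => ?_
      have : ¬ S ⊆ F := fun hsub => by
        have := Finset.card_le_card hsub; omega
      obtain ⟨s, hsS, hsF⟩ := Finset.not_subset.mp this
      exact ⟨s, hsF, hs₀ s hsS⟩
    calc ∑ s ∈ S, |x s| = ∑ s ∈ S.erase s₀, |x s| + |x s₀| :=
          (Finset.sum_erase_add S _ hs₀S).symm
      _ ≤ ∑ n ∈ Finset.range j, rearr x n + rearr x j := by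
          refine add_le_add ?_ hmin
          exact ih (S.erase s₀) hcard
      _ = ∑ n ∈ Finset.range (j + 1), rearr x n := (Finset.sum_range_succ _ _).symm

end lems

section lems2
variable {x a b : ℕ → ℝ}

lemma isBdd_of_summable (ha : Summable fun n => |a n|) : IsBdd a :=
  ⟨∑' n, |a n|, fun n => Summable.le_tsum ha n (fun m _ => abs_nonneg _)⟩

lemma exists_max_of_summable (ha : Summable fun n => |a n|) :
    ∃ k0, ∀ n, |a n| ≤ |a k0| := by
  by_cases hz : ∀ n, a n = 0
  · exact ⟨0, fun n => by simp [hz]⟩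
  push_neg at hz
  obtain ⟨m, hm⟩ := hz
  have hm' : 0 < |a m| := abs_pos.mpr hm
  have htend : Tendsto (fun n => |a n|) (cocompact ℕ) (nhds 0) := by
    rw [cocompact_eq_atTop]
    exact ha.tendsto_atTop_zero
  refine Continuous.exists_forall_ge' (by continuity) m ?_
  exact htend.eventually_le_const hm'

/-- `rearr` shifts down when the maximal entry is removed. -/
lemma rearr_succ_le_update (k0 : ℕ) (n : ℕ) (hu : IsBdd a) :
    rearr a (n + 1) ≤ rearr (Function.update a k0 0) n := by
  refine le_csInf (rearr_set_nonempty _ n) ?_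
  rintro r ⟨F, hF, rfl⟩
  have hcard : (insert k0 F).card ≤ n + 1 := (Finset.card_insert_le _ _).trans (by omega)
  refine (rearr_le_sup hu hcard).trans ?_
  refine ciSup_le fun k => ?_
  have hk0 : k.1 ≠ k0 := fun h => k.2 (by rw [h]; exact Finset.mem_insert_self k0 F)
  have hkF : k.1 ∉ F := fun h => k.2 (Finset.mem_insert_of_mem h)
  have : |a k.1| = |Function.update a k0 0 k.1| := by
    rw [Function.update_apply, if_neg hk0]
  rw [this]
  exact le_ciSup (bddAbove_compl (by
    obtain ⟨C, hC⟩ := hu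
    refine ⟨C ⊔ 0, fun m => ?_⟩
    rw [Function.update_apply]
    split
    · simp
    · exact (hC m).trans le_sup_left) F) (⟨k.1, hkF⟩ : {m : ℕ // m ∉ F})

/-- Sum of the first `m` rearranged values is at most the `ℓ¹` norm. -/
lemma sum_rearr_le_tsum (ha : Summable fun n => |a n|) (m : ℕ) :
    ∑ n ∈ Finset.range m, rearr a n ≤ ∑' n, |a n| := by
  induction m generalizing a with
  | zero => simpa using tsum_nonneg (fun n => abs_nonneg (a n))
  | succ m ih =>
    obtain ⟨k0, hk0⟩ := exists_max_of_summable ha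
    set a' := Function.update a k0 0 with ha'
    have habs : ∀ n, |a' n| = if n = k0 then 0 else |a n| := by
      intro n; rw [ha', Function.update_apply]; split <;> simp
    have ha'sum : Summable fun n => |a' n| := by
      refine Summable.of_nonneg_of_le (fun n => abs_nonneg _) (fun n => ?_) ha
      rw [habs]; split
      · exact abs_nonneg _
      · exact le_rfl
    have hbdd : IsBdd a := isBdd_of_summable ha
    have h0 : rearr a 0 ≤ |a k0| := by
      refine (rearr_le_sup hbdd (le_rfl : (∅ : Finset ℕ).card ≤ 0)).trans ?_
      exact ciSup_le fun k => hk0 k.1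
    have hshift : ∀ n, rearr a (n + 1) ≤ rearr a' n :=
      fun n => rearr_succ_le_update k0 n hbdd
    have hsum : ∑' n, |a n| = |a k0| + ∑' n, |a' n| := by
      rw [Summable.tsum_eq_add_tsum_ite ha k0]
      congr 1
      exact tsum_congr fun n => by rw [habs n]
    calc ∑ n ∈ Finset.range (m + 1), rearr a n
        = rearr a 0 + ∑ n ∈ Finset.range m, rearr a (n + 1) := by
          rw [Finset.sum_range_succ']; ring
      _ ≤ |a k0| + ∑ n ∈ Finset.range m, rearr a' n :=
          add_le_add h0 (Finset.sum_le_sum fun n _ => hshift n)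
      _ ≤ |a k0| + ∑' n, |a' n| := add_le_add le_rfl (ih ha'sum)
      _ = ∑' n, |a n| := hsum.symm

end lems2


/-- Calderón–Mityagin: a Dunford–Schwartz operator decreases HLP majorization. -/
lemma sum_rearr_DS_le (T : (ℕ → ℝ) →ₗ[ℝ] (ℕ → ℝ)) (hT : IsDS T) {x : ℕ → ℝ}
    (hx : IsBdd x) (k : ℕ) :
    ∑ n ∈ Finset.range (k + 1), rearr (T x) n ≤ ∑ n ∈ Finset.range (k + 1), rearr x n := by
  refine le_of_forall_pos_le_add fun ε hε => ?_
  set m := k + 1 with hm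
  set δ := ε / m with hδdef
  have hδ : 0 < δ := div_pos hε (by positivity)
  set t := rearr x k with htdef
  have ht0 : 0 ≤ t := rearr_nonneg hx k
  have htδ : 0 ≤ t + δ := by linarith
  -- every finset inside the level set has at most k elements
  have hsmall : ∀ F : Finset ℕ, (∀ s ∈ F, t + δ < |x s|) → F.card ≤ k := by
    intro F hF
    by_contra hgt
    push_neg at hgt
    have hle : t + δ ≤ rearr x k := by
      refine le_rearr hx fun G hG => ?_
      have hns : ¬ F ⊆ G := fun hsub => by have := Finset.card_le_card hsub; omega
      obtain ⟨s, hsF, hsG⟩ := Finset.not_subset.mp hns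
      exact ⟨s, hsG, (hF s hsF).le⟩
    linarith
  have hfin : {n : ℕ | t + δ < |x n|}.Finite := by
    by_contra hinf
    obtain ⟨F, hFsub, hFcard⟩ :=
      (Set.Infinite.exists_subset_card_eq (hinf : {n : ℕ | t + δ < |x n|}.Infinite)) (k + 1)
    have := hsmall F (fun s hs => hFsub hs)
    omega
  set S := hfin.toFinset with hSdef
  have hScard : S.card ≤ k := by
    refine hsmall S fun s hs => ?_
    rw [hSdef, Set.Finite.mem_toFinset] at hs
    exact hs
  set j := S.card with hjdef
  -- the decomposition
  set v : ℕ → ℝ := fun n => max (-(t + δ)) (min (x n) (t + δ)) with hvdef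
  set u : ℕ → ℝ := fun n => x n - v n with hudef
  have hv_abs : ∀ n, |v n| ≤ t + δ := by
    intro n
    rw [abs_le]
    constructor
    · exact le_max_left _ _
    · exact max_le (by linarith) (min_le_right _ _)
  have hu_zero : ∀ n, n ∉ S → u n = 0 := by
    intro n hn
    rw [hSdef, Set.Finite.mem_toFinset, Set.mem_setOf_eq, not_lt] at hn
    obtain ⟨h1, h2⟩ := abs_le.mp hn
    have : v n = x n := by
      rw [hvdef]; dsimp only
      rw [min_eq_left h2, max_eq_right h1]
    rw [hudef]; dsimp only; rw [this, sub_self]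
  have hu_abs : ∀ n ∈ S, |u n| ≤ |x n| - (t + δ) := by
    intro n hn
    rw [hSdef, Set.Finite.mem_toFinset, Set.mem_setOf_eq] at hn
    rcases lt_abs.mp hn with h | h
    · -- x n > t + δ
      have hv : v n = t + δ := by
        rw [hvdef]; dsimp only
        rw [min_eq_right h.le, max_eq_right (by linarith : -(t+δ) ≤ t+δ)]
      rw [hudef]; simp only []; rw [hv]
      rw [abs_of_nonneg (by linarith), abs_of_pos (by linarith)]
    · -- x n < -(t + δ)
      have hv : v n = -(t + δ) := by
        rw [hvdef]; dsimp only
        rw [min_eq_left (by linarith), max_eq_left (by linarith)]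
      rw [hudef]; dsimp only; rw [hv]
      rw [abs_of_nonpos (by linarith), abs_of_neg (by linarith)]
      ring_nf
      linarith
  have hu_summ : Summable fun n => |u n| :=
    summable_of_ne_finset_zero (s := S) fun n hn => by rw [hu_zero n hn, abs_zero]
  have hu_tsum : ∑' n, |u n| = ∑ n ∈ S, |u n| :=
    tsum_eq_sum fun n hn => by rw [hu_zero n hn, abs_zero]
  have hu_bdd : IsBdd u := isBdd_of_summable hu_summ
  have hv_bdd : IsBdd v := ⟨t + δ, hv_abs⟩
  have hTu := hT.2 u hu_bdd
  have hTv := hT.2 v hv_bdd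
  have hTu1 := hT.1 u hu_summ
  -- T x = T u + T v
  have hxuv : x = u + v := by
    funext n
    show x n = (x n - v n) + v n
    ring
  have hTx : T x = T u + T v := by rw [hxuv, map_add]
  -- sup norm of T v
  have hsupv : supNorm v ≤ t + δ := ciSup_le hv_abs
  have hsupTv : supNorm (T v) ≤ t + δ := hTv.2.trans hsupv
  -- main chain
  have step1 : ∑ n ∈ Finset.range m, rearr (T x) n ≤
      ∑ n ∈ Finset.range m, rearr (T u) n + m * (t + δ) := by
    have h1 : ∀ n, rearr (T x) n ≤ rearr (T u) n + (t + δ) := by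
      intro n
      rw [hTx]
      exact (rearr_add_le hTu.1 hTv.1 n).trans (by linarith [hsupTv])
    calc ∑ n ∈ Finset.range m, rearr (T x) n
        ≤ ∑ n ∈ Finset.range m, (rearr (T u) n + (t + δ)) :=
          Finset.sum_le_sum fun n _ => h1 n
      _ = ∑ n ∈ Finset.range m, rearr (T u) n + m * (t + δ) := by
          rw [Finset.sum_add_distrib, Finset.sum_const, Finset.card_range]
          push_cast; ring
  have step2 : ∑ n ∈ Finset.range m, rearr (T u) n ≤ ∑ n ∈ S, |u n| := by
    calc ∑ n ∈ Finset.range m, rearr (T u) n ≤ ∑' n, |T u n| := sum_rearr_le_tsum hTu1.1 m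
      _ ≤ ∑' n, |u n| := hTu1.2
      _ = ∑ n ∈ S, |u n| := hu_tsum
  have step3 : ∑ n ∈ S, |u n| ≤ ∑ n ∈ Finset.range j, rearr x n - j * (t + δ) := by
    have h1 : ∑ n ∈ S, |u n| ≤ ∑ n ∈ S, (|x n| - (t + δ)) :=
      Finset.sum_le_sum hu_abs
    have h2 : ∑ n ∈ S, (|x n| - (t + δ)) = ∑ n ∈ S, |x n| - j * (t + δ) := by
      rw [Finset.sum_sub_distrib, Finset.sum_const, hjdef]
      push_cast; ring
    have h3 := sum_abs_le_sum_rearr hx S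
    rw [← hjdef] at h3
    linarith
  have step4 : ∑ n ∈ Finset.range j, rearr x n + (m - j) * t ≤
      ∑ n ∈ Finset.range m, rearr x n := by
    have hjm : j ≤ m := by omega
    rw [← Finset.sum_range_add_sum_Ico (rearr x) hjm]
    have h1 : (m - j : ℕ) • t ≤ ∑ n ∈ Finset.Ico j m, rearr x n := by
      have := Finset.card_nsmul_le_sum (Finset.Ico j m) (rearr x) t
        (fun n hn => by
          have hnk : n ≤ k := by
            have := (Finset.mem_Ico.mp hn).2; omega
          exact rearr_antitone hx hnk)
      rwa [Nat.card_Ico] at this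
    have h2 : ((m - j : ℕ) : ℝ) = (m : ℝ) - j := by
      push_cast [Nat.cast_sub hjm]; ring
    rw [nsmul_eq_mul, h2] at h1
    linarith
  have hmδ : (m : ℝ) * δ = ε := by
    rw [hδdef]
    field_simp
    exact div_self (by rw [hm]; exact_mod_cast Nat.succ_ne_zero k)
  have hj_le : ((j : ℝ)) ≤ (m : ℝ) := by
    have : j ≤ m := by omega
    exact_mod_cast this
  have hfinal : ∑ n ∈ Finset.range m, rearr (T x) n ≤
      ∑ n ∈ Finset.range m, rearr x n + ε := by
    have e1 : ((m : ℝ) - j) * (t + δ) = ((m : ℝ) - j) * t + ((m : ℝ) - j) * δ := by ring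
    nlinarith [step1, step2, step3, step4, hδ.le, ht0, hj_le, hmδ]
  exact hfinal


/-- A Dunford–Schwartz operator leaves every fully symmetric sequence space invariant
and is a contraction on it. -/
theorem stmt5 (T : (ℕ → ℝ) →ₗ[ℝ] (ℕ → ℝ)) (hT : IsDS T) (E : FullySymmSeqSpace) :
    ∀ x ∈ E.carrier, T x ∈ E.carrier ∧ E.N (T x) ≤ E.N x := by
  intro x hx
  have hxb : IsBdd x := E.bdd x hx
  have hTxb : IsBdd (T x) := (hT.2 x hxb).1
  exact E.fullySymm x hx (T x) hTxb (fun k => sum_rearr_DS_le T hT hxb k)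
end

section
/- If T is a Dunford-Schwartz operator on ℓ∞ and x ∈ c₀, then there exists x̂ ∈ c₀ such that ‖(1/n) Σ_{k=0}^{n−1} T^k(x) − x̂‖_∞ → 0 as n → ∞. -/
open Filter Finset Topology
set_option maxHeartbeats 1000000

namespace ET

abbrev E := BoundedContinuousFunction ℕ ℝ

attribute [local instance] Classical.propDecidable

open Filter Finset Topology BoundedContinuousFunction

lemma supNorm_le {x : ℕ → ℝ} {C : ℝ} (hC : 0 ≤ C) (h : ∀ s, |x s| ≤ C) : supNorm x ≤ C :=
  Real.iSup_le h hC

lemma supNorm_nonneg (x : ℕ → ℝ) : 0 ≤ supNorm x :=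
  Real.iSup_nonneg (fun s => abs_nonneg _)

lemma le_supNorm {x : ℕ → ℝ} (hx : IsBdd x) (s : ℕ) : |x s| ≤ supNorm x := by
  obtain ⟨C, hC⟩ := hx
  exact le_ciSup ⟨C, by rintro r ⟨s', rfl⟩; exact hC s'⟩ s

lemma isBdd_of_tendsto {x : ℕ → ℝ} (hx : Tendsto x atTop (nhds 0)) : IsBdd x := by
  have h := (Metric.tendsto_atTop.1 hx) 1 one_pos
  obtain ⟨N, hN⟩ := h
  refine ⟨(∑ i ∈ Finset.range (N+1), |x i|) + 1, fun n => ?_⟩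
  rcases lt_or_ge n N with h | h
  · calc |x n| ≤ ∑ i ∈ Finset.range (N+1), |x i| :=
        Finset.single_le_sum (f := fun i => |x i|) (fun i _ => abs_nonneg _)
          (Finset.mem_range.2 (by omega))
    _ ≤ _ := by
        have : (0:ℝ) ≤ 1 := zero_le_one
        linarith
  · have := hN n h
    rw [Real.dist_eq, sub_zero] at this
    have h0 : (0:ℝ) ≤ ∑ i ∈ Finset.range (N+1), |x i| :=
      Finset.sum_nonneg (fun i _ => abs_nonneg _)
    linarith [this.le]

lemma isBdd_sub {x y : ℕ → ℝ} (hx : IsBdd x) (hy : IsBdd y) :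
    IsBdd (fun s => x s - y s) := by
  obtain ⟨C, hC⟩ := hx; obtain ⟨D, hD⟩ := hy
  exact ⟨C + D, fun s => (abs_sub (x s) (y s)).trans (add_le_add (hC s) (hD s))⟩

lemma isBdd_add {x y : ℕ → ℝ} (hx : IsBdd x) (hy : IsBdd y) :
    IsBdd (fun s => x s + y s) := by
  obtain ⟨C, hC⟩ := hx; obtain ⟨D, hD⟩ := hy
  exact ⟨C + D, fun s => (abs_add_le (x s) (y s)).trans (add_le_add (hC s) (hD s))⟩

/-- embed a bounded sequence into `ℓ∞` (junk value `0` otherwise) -/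
noncomputable def mkE (x : ℕ → ℝ) : E :=
  if h : IsBdd x then ofNormedAddCommGroupDiscrete x h.choose
    (fun s => by simpa using h.choose_spec s) else 0

lemma mkE_apply {x : ℕ → ℝ} (h : IsBdd x) (s : ℕ) : mkE x s = x s := by
  simp only [mkE, dif_pos h]; rfl

lemma mkE_coe {x : ℕ → ℝ} (h : IsBdd x) : ⇑(mkE x) = x := funext (mkE_apply h)

lemma supNorm_eq_norm (f : E) : supNorm ⇑f = ‖f‖ := by
  refine le_antisymm (supNorm_le (norm_nonneg f) (fun s => ?_)) ?_
  · simpa using f.norm_coe_le_norm s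
  · refine (BoundedContinuousFunction.norm_le (supNorm_nonneg _)).2 (fun s => ?_)
    have : |f s| ≤ supNorm ⇑f := le_supNorm ⟨‖f‖, fun s => by simpa using f.norm_coe_le_norm s⟩ s
    simpa using this

lemma supNorm_mkE {x : ℕ → ℝ} (h : IsBdd x) : supNorm x = ‖mkE x‖ := by
  rw [← supNorm_eq_norm, mkE_coe h]

lemma supNorm_sub_eq {x : ℕ → ℝ} (hx : IsBdd x) (g : E) :
    supNorm (fun s => x s - g s) = ‖mkE x - g‖ := by
  rw [← supNorm_eq_norm]
  congr 1
  funext s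
  simp [mkE_apply hx]




variable {T : (ℕ → ℝ) →ₗ[ℝ] (ℕ → ℝ)}

lemma iter_bdd (hT : IsDS T) {x : ℕ → ℝ} (hx : IsBdd x) (k : ℕ) : IsBdd ((⇑T)^[k] x) := by
  induction k with
  | zero => simpa using hx
  | succ k ih => rw [Function.iterate_succ_apply']; exact (hT.2 _ ih).1

lemma iter_supNorm (hT : IsDS T) {x : ℕ → ℝ} (hx : IsBdd x) (k : ℕ) :
    supNorm ((⇑T)^[k] x) ≤ supNorm x := by
  induction k with
  | zero => simp
  | succ k ih =>
    rw [Function.iterate_succ_apply']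
    exact le_trans (hT.2 _ (iter_bdd hT hx k)).2 ih

lemma cesaro_abs_le (hT : IsDS T) {x : ℕ → ℝ} (hx : IsBdd x) (n s : ℕ) :
    |cesaro T n x s| ≤ supNorm x := by
  rcases Nat.eq_zero_or_pos n with rfl | hn
  · simpa [cesaro] using supNorm_nonneg x
  · have h1 : |∑ k ∈ Finset.range n, (⇑T)^[k] x s| ≤ (n : ℝ) * supNorm x := by
      calc |∑ k ∈ Finset.range n, (⇑T)^[k] x s| ≤ ∑ k ∈ Finset.range n, |(⇑T)^[k] x s| :=
            Finset.abs_sum_le_sum_abs _ _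
        _ ≤ ∑ k ∈ Finset.range n, supNorm x :=
            Finset.sum_le_sum (fun k _ => (le_supNorm (iter_bdd hT hx k) s).trans
              (iter_supNorm hT hx k))
        _ = (n : ℝ) * supNorm x := by simp [mul_comm]
    have hn' : (0:ℝ) < n := by exact_mod_cast hn
    rw [cesaro, abs_div, abs_of_pos hn']
    rw [div_le_iff₀ hn']
    linarith [h1]

lemma cesaro_bdd (hT : IsDS T) {x : ℕ → ℝ} (hx : IsBdd x) (n : ℕ) : IsBdd (cesaro T n x) :=
  ⟨supNorm x, cesaro_abs_le hT hx n⟩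

lemma cesaro_supNorm_le (hT : IsDS T) {x : ℕ → ℝ} (hx : IsBdd x) (n : ℕ) :
    supNorm (cesaro T n x) ≤ supNorm x :=
  supNorm_le (supNorm_nonneg x) (cesaro_abs_le hT hx n)

lemma iter_add (x y : ℕ → ℝ) (k : ℕ) :
    (⇑T)^[k] (x + y) = (⇑T)^[k] x + (⇑T)^[k] y := by
  induction k with
  | zero => simp
  | succ k ih => rw [Function.iterate_succ_apply', ih, map_add,
      Function.iterate_succ_apply', Function.iterate_succ_apply']

lemma iter_sub (x y : ℕ → ℝ) (k : ℕ) :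
    (⇑T)^[k] (x - y) = (⇑T)^[k] x - (⇑T)^[k] y := by
  induction k with
  | zero => simp
  | succ k ih => rw [Function.iterate_succ_apply', ih, map_sub,
      Function.iterate_succ_apply', Function.iterate_succ_apply']

lemma iter_smul (c : ℝ) (x : ℕ → ℝ) (k : ℕ) :
    (⇑T)^[k] (c • x) = c • (⇑T)^[k] x := by
  induction k with
  | zero => simp
  | succ k ih => rw [Function.iterate_succ_apply', ih, map_smul,
      Function.iterate_succ_apply']

lemma cesaro_add (x y : ℕ → ℝ) (n : ℕ) :
    cesaro T n (x + y) = cesaro T n x + cesaro T n y := by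
  funext s
  simp only [cesaro, iter_add, Pi.add_apply, Finset.sum_add_distrib]
  ring

lemma cesaro_sub (x y : ℕ → ℝ) (n : ℕ) :
    cesaro T n (x - y) = cesaro T n x - cesaro T n y := by
  funext s
  simp only [cesaro, iter_sub, Pi.sub_apply, Finset.sum_sub_distrib]
  ring

lemma cesaro_smul (c : ℝ) (x : ℕ → ℝ) (n : ℕ) :
    cesaro T n (c • x) = c • cesaro T n x := by
  funext s
  simp only [cesaro, iter_smul, Pi.smul_apply, smul_eq_mul, ← Finset.mul_sum]
  ring

lemma cesaro_fix {f : ℕ → ℝ} (hf : T f = f) {n : ℕ} (hn : n ≠ 0) :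
    cesaro T n f = f := by
  have hit : ∀ k, (⇑T)^[k] f = f := by
    intro k; induction k with
    | zero => simp
    | succ k ih => rw [Function.iterate_succ_apply', ih, hf]
  funext s
  simp only [cesaro, hit]
  rw [Finset.sum_const, Finset.card_range]
  have hn' : (n:ℝ) ≠ 0 := by exact_mod_cast hn
  field_simp
  rw [nsmul_eq_mul]

lemma cesaro_cobound (y : ℕ → ℝ) (n : ℕ) :
    cesaro T n (y - T y) = fun s => (y s - (⇑T)^[n] y s) / n := by
  funext s
  simp only [cesaro, iter_sub]
  congr 1
  have : ∀ k, (⇑T)^[k] (T y) = (⇑T)^[k+1] y := by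
    intro k; rw [Function.iterate_succ_apply]
  calc ∑ k ∈ Finset.range n, ((⇑T)^[k] y - (⇑T)^[k] (T y)) s
      = ∑ k ∈ Finset.range n, ((⇑T)^[k] y s - (⇑T)^[k+1] y s) := by
        apply Finset.sum_congr rfl; intro k _; rw [this k]; rfl
    _ = (⇑T)^[0] y s - (⇑T)^[n] y s := Finset.sum_range_sub' (fun k => (⇑T)^[k] y s) n
    _ = y s - (⇑T)^[n] y s := by simp

lemma cesaro_cobound_bound (hT : IsDS T) {y : ℕ → ℝ} (hy : IsBdd y) (n : ℕ) (s : ℕ) :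
    |cesaro T n (y - T y) s| ≤ 2 * supNorm y / n := by
  rcases Nat.eq_zero_or_pos n with rfl | hn
  · simp [cesaro]
  · rw [cesaro_cobound]
    have hn' : (0:ℝ) < n := by exact_mod_cast hn
    have hnum : |y s - (⇑T)^[n] y s| ≤ 2 * supNorm y := by
      calc |y s - (⇑T)^[n] y s| ≤ |y s| + |(⇑T)^[n] y s| := abs_sub _ _
        _ ≤ supNorm y + supNorm y :=
            add_le_add (le_supNorm hy s)
              ((le_supNorm (iter_bdd hT hy n) s).trans (iter_supNorm hT hy n))
        _ = 2 * supNorm y := by ring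
    rw [abs_div, abs_of_pos hn']
    gcongr




noncomputable def dl (j : ℕ) : ℕ → ℝ := fun s => if s = j then (1:ℝ) else 0

lemma dl_bdd (j : ℕ) : IsBdd (dl j) :=
  ⟨1, fun s => by by_cases h : s = j <;> simp [dl, h]⟩

lemma dl_tendsto (j : ℕ) : Tendsto (dl j) atTop (nhds 0) := by
  have : ∀ᶠ s in atTop, dl j s = 0 := by
    filter_upwards [eventually_ge_atTop (j+1)] with s hs
    have : s ≠ j := by omega
    simp [dl, this]
  exact Tendsto.congr' (this.mono fun s h => h.symm) tendsto_const_nhds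

lemma dl_summable_abs (j : ℕ) : Summable (fun s => |dl j s|) := by
  apply summable_of_ne_finset_zero (s := {j})
  intro s hs
  simp only [Finset.mem_singleton] at hs
  simp [dl, hs]

lemma dl_tsum_abs (j : ℕ) : ∑' s, |dl j s| = 1 := by
  rw [tsum_eq_sum (s := {j}) (by intro s hs; simp only [Finset.mem_singleton] at hs; simp [dl, hs])]
  simp [dl]

lemma dl_supNorm_le (j : ℕ) : supNorm (dl j) ≤ 1 :=
  supNorm_le zero_le_one (fun s => by by_cases h : s = j <;> simp [dl, h])

section matrix
variable {T : (ℕ → ℝ) →ₗ[ℝ] (ℕ → ℝ)}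

/-- matrix entries of `T` -/
noncomputable def mat (T : (ℕ → ℝ) →ₗ[ℝ] (ℕ → ℝ)) (s t : ℕ) : ℝ := T (dl s) t

lemma row_summable (hT : IsDS T) (s : ℕ) : Summable (fun t => |mat T s t|) :=
  (hT.1 (dl s) (dl_summable_abs s)).1

lemma row_tsum_le (hT : IsDS T) (s : ℕ) : ∑' t, |mat T s t| ≤ 1 := by
  have := (hT.1 (dl s) (dl_summable_abs s)).2
  rwa [dl_tsum_abs s] at this

lemma Tdl_tendsto (hT : IsDS T) (s : ℕ) : Tendsto (T (dl s)) atTop (nhds 0) :=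
  (Summable.of_abs (row_summable hT s)).tendsto_atTop_zero

/-- column partial sums are at most 1, from the `ℓ∞` contraction -/
lemma col_sum_le (hT : IsDS T) (t : ℕ) (F : Finset ℕ) : ∑ s ∈ F, |mat T s t| ≤ 1 := by
  classical
  set c : ℕ → ℝ := fun r => if mat T r t < 0 then (-1:ℝ) else 1 with hc
  have hcm : ∀ r, c r * mat T r t = |mat T r t| := by
    intro r
    rcases lt_or_ge (mat T r t) 0 with h | h
    · simp [hc, h, abs_of_neg h]
    · simp [hc, not_lt.2 h, abs_of_nonneg h]
  set g : ℕ → ℝ := ∑ s ∈ F, c s • dl s with hg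
  have hgval : ∀ r, g r = if r ∈ F then c r else 0 := by
    intro r
    rw [hg, Finset.sum_apply]
    have : ∀ s ∈ F, (c s • dl s) r = if r = s then c s else 0 := by
      intro s _
      simp only [Pi.smul_apply, smul_eq_mul, dl]
      by_cases h : r = s <;> simp [h]
    rw [Finset.sum_congr rfl this, Finset.sum_ite_eq]
  have hgbdd : IsBdd g := by
    refine ⟨1, fun r => ?_⟩
    rw [hgval r]
    by_cases h : r ∈ F
    · simp only [if_pos h]
      rcases lt_or_ge (mat T r t) 0 with h' | h'
      · simp [hc, h']
      · simp [hc, not_lt.2 h']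
    · simp [h]
  have hgsup : supNorm g ≤ 1 := by
    apply supNorm_le zero_le_one
    intro r
    rw [hgval r]
    by_cases h : r ∈ F
    · simp only [if_pos h]
      rcases lt_or_ge (mat T r t) 0 with h' | h'
      · simp [hc, h']
      · simp [hc, not_lt.2 h']
    · simp [h]
  have hTg : T g t = ∑ s ∈ F, |mat T s t| := by
    rw [hg, map_sum]
    rw [Finset.sum_apply]
    apply Finset.sum_congr rfl
    intro s _
    rw [map_smul]
    simpa [mat] using hcm s
  calc ∑ s ∈ F, |mat T s t| = T g t := hTg.symm
    _ ≤ |T g t| := le_abs_self _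
    _ ≤ supNorm (T g) := le_supNorm (hT.2 g hgbdd).1 t
    _ ≤ supNorm g := (hT.2 g hgbdd).2
    _ ≤ 1 := hgsup

lemma col_summable (hT : IsDS T) (t : ℕ) : Summable (fun s => |mat T s t|) :=
  summable_of_sum_le (fun s => abs_nonneg _) (col_sum_le hT t)

lemma col_tsum_le (hT : IsDS T) (t : ℕ) : ∑' s, |mat T s t| ≤ 1 :=
  Summable.tsum_le_of_sum_le (col_summable hT t) (col_sum_le hT t)

lemma mat_abs_le_one (hT : IsDS T) (s t : ℕ) : |mat T s t| ≤ 1 := by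
  have := col_sum_le hT t {s}
  simpa using this

end matrix



variable {T : (ℕ → ℝ) →ₗ[ℝ] (ℕ → ℝ)}

/-- The key fixed-vector lemma: a nonzero `ℓ¹` vector fixed by the (transposed)
matrix action yields a finitely supported fixed vector of `T` pairing nontrivially. -/
lemma lemK (hT : IsDS T) (φ : ℕ → ℝ) (hsum : Summable fun t => |φ t|)
    (hfix : ∀ s, φ s = ∑' t, mat T s t * φ t) (hne : ∃ t, φ t ≠ 0) :
    ∃ z : ℕ → ℝ, IsBdd z ∧ Tendsto z atTop (nhds 0) ∧ T z = z ∧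
      0 < ∑' t, z t * φ t := by
  classical
  set ψ : ℕ → ℝ := fun t => |φ t| with hψdef
  have hψ0 : ∀ t, 0 ≤ ψ t := fun t => abs_nonneg _
  have hψs : Summable ψ := hsum
  set tot : ℝ := ∑' t, ψ t with htot
  have hψle_tot : ∀ t, ψ t ≤ tot := fun t => Summable.le_tsum hψs t (fun j _ => hψ0 j)
  -- summability of rows against ψ
  have srow : ∀ s, Summable (fun t => |mat T s t| * ψ t) := by
    intro s
    refine Summable.of_nonneg_of_le (fun t => mul_nonneg (abs_nonneg _) (hψ0 t))
      (fun t => ?_) ((row_summable hT s).mul_right tot)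
    exact mul_le_mul_of_nonneg_left (hψle_tot t) (abs_nonneg _)
  have sφrow : ∀ s, Summable (fun t => mat T s t * φ t) := by
    intro s
    refine Summable.of_abs ?_
    have : (fun t => |mat T s t * φ t|) = fun t => |mat T s t| * ψ t := by
      funext t; rw [abs_mul]
    rw [this]; exact srow s
  set G : ℕ → ℝ := fun s => ∑' t, |mat T s t| * ψ t with hG
  have ha : ∀ s, ψ s ≤ G s := by
    intro s
    have hs2 : Summable (fun t => ‖mat T s t * φ t‖) := by
      simpa [Real.norm_eq_abs, abs_mul] using srow s
    have h2 : |∑' t, mat T s t * φ t| ≤ ∑' t, |mat T s t| * ψ t := by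
      have := norm_tsum_le_tsum_norm hs2
      simpa [Real.norm_eq_abs, abs_mul] using this
    calc ψ s = |∑' t, mat T s t * φ t| := by show |φ s| = _; rw [← hfix s]
      _ ≤ ∑' t, |mat T s t| * ψ t := h2
      _ = G s := rfl
  -- product summability
  set F2 : ℕ × ℕ → ℝ := fun p => |mat T p.1 p.2| * ψ p.2 with hF2
  have hF2nn : 0 ≤ F2 := fun p => mul_nonneg (abs_nonneg _) (hψ0 _)
  have hF2sum : Summable F2 := by
    refine summable_of_sum_le (c := tot) hF2nn (fun u => ?_)
    have hsub : u ⊆ (u.image Prod.fst) ×ˢ (u.image Prod.snd) := by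
      intro p hp
      rw [Finset.mem_product]
      exact ⟨Finset.mem_image_of_mem _ hp, Finset.mem_image_of_mem _ hp⟩
    calc ∑ p ∈ u, F2 p ≤ ∑ p ∈ (u.image Prod.fst) ×ˢ (u.image Prod.snd), F2 p :=
          Finset.sum_le_sum_of_subset_of_nonneg hsub (fun p _ _ => hF2nn p)
      _ = ∑ s ∈ u.image Prod.fst, ∑ t ∈ u.image Prod.snd, |mat T s t| * ψ t :=
          Finset.sum_product _ _ _
      _ = ∑ t ∈ u.image Prod.snd, ∑ s ∈ u.image Prod.fst, |mat T s t| * ψ t :=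
          Finset.sum_comm
      _ = ∑ t ∈ u.image Prod.snd, (∑ s ∈ u.image Prod.fst, |mat T s t|) * ψ t := by
          apply Finset.sum_congr rfl; intro t _; rw [Finset.sum_mul]
      _ ≤ ∑ t ∈ u.image Prod.snd, ψ t := by
          apply Finset.sum_le_sum; intro t _
          exact mul_le_of_le_one_left (hψ0 t) (col_sum_le hT t _)
      _ ≤ tot := Summable.sum_le_tsum _ (fun t _ => hψ0 t) hψs
  have hGsum : Summable G := by
    have := (summable_prod_of_nonneg hF2nn).1 hF2sum
    exact this.2
  have hswap : ∑' s, G s = ∑' t, (∑' s, |mat T s t|) * ψ t := by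
    have hcomm := Summable.tsum_comm' (f := fun s t => |mat T s t| * ψ t) hF2sum
      (fun s => srow s) (fun t => (col_summable hT t).mul_right (ψ t))
    calc ∑' s, G s = ∑' s, ∑' t, |mat T s t| * ψ t := rfl
      _ = ∑' t, ∑' s, |mat T s t| * ψ t := hcomm.symm
      _ = ∑' t, (∑' s, |mat T s t|) * ψ t := by
          congr 1; funext t; rw [tsum_mul_right]
  have hGle : ∑' s, G s ≤ tot := by
    rw [hswap]
    refine Summable.tsum_le_tsum (fun t => ?_) ?_ hψs
    · exact mul_le_of_le_one_left (hψ0 t) (col_tsum_le hT t)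
    · refine Summable.of_nonneg_of_le
        (fun t => mul_nonneg (tsum_nonneg (fun s => abs_nonneg _)) (hψ0 t))
        (fun t => mul_le_of_le_one_left (hψ0 t) (col_tsum_le hT t)) hψs
  have hEq : ∀ s, ψ s = G s := by
    intro s
    have hd : Summable (fun s => G s - ψ s) := hGsum.sub hψs
    have hdnn : ∀ r, 0 ≤ G r - ψ r := fun r => sub_nonneg.2 (ha r)
    have hdt : ∑' r, (G r - ψ r) ≤ 0 := by
      rw [Summable.tsum_sub hGsum hψs]; linarith [hGle]
    have := Summable.le_tsum hd s (fun j _ => hdnn j)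
    have h0 : G s - ψ s = 0 := le_antisymm (this.trans hdt) (hdnn s)
    linarith
  -- sign vector
  set u : ℕ → ℝ := fun t => if φ t < 0 then (-1:ℝ) else if φ t = 0 then 0 else 1 with hu
  have huφ : ∀ t, u t * φ t = ψ t := by
    intro t
    rcases lt_trichotomy (φ t) 0 with h | h | h
    · simp [hu, hψdef, h, abs_of_neg h]
    · simp [hu, hψdef, h]
    · simp [hu, hψdef, not_lt.2 h.le, ne_of_gt h, abs_of_pos h]
  have huabs : ∀ t, |u t| ≤ 1 := by
    intro t
    rcases lt_trichotomy (φ t) 0 with h | h | h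
    · simp [hu, h]
    · simp [hu, h]
    · simp [hu, not_lt.2 h.le, ne_of_gt h]
  have husq' : ∀ t, u t * u t = 1 ∨ u t = 0 := by
    intro t
    rcases lt_trichotomy (φ t) 0 with h | h | h
    · left; simp [hu, h]
    · right; simp [hu, h]
    · left; simp [hu, not_lt.2 h.le, ne_of_gt h]
  have husq : ∀ t, φ t ≠ 0 → u t * u t = 1 := by
    intro t ht
    rcases lt_trichotomy (φ t) 0 with h | h | h
    · simp [hu, h]
    · exact absurd h ht
    · simp [hu, not_lt.2 h.le, ne_of_gt h]
  have hφu : ∀ t, φ t ≠ 0 → φ t = u t * ψ t := by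
    intro t ht
    have h1 : u t * (u t * φ t) = u t * ψ t := by rw [huφ t]
    rw [← mul_assoc, husq t ht, one_mul] at h1
    exact h1
  -- alignment
  have halign : ∀ s t, mat T s t * φ t = u s * (|mat T s t| * ψ t) := by
    intro s t
    set a : ℕ → ℝ := fun r => |mat T s r| * ψ r - u s * (mat T s r * φ r) with haa
    have hann : ∀ r, 0 ≤ a r := by
      intro r
      have h1 : u s * (mat T s r * φ r) ≤ |mat T s r * φ r| := by
        calc u s * (mat T s r * φ r) ≤ |u s * (mat T s r * φ r)| := le_abs_self _
          _ = |u s| * |mat T s r * φ r| := abs_mul _ _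
          _ ≤ 1 * |mat T s r * φ r| := by
              exact mul_le_mul_of_nonneg_right (huabs s) (abs_nonneg _)
          _ = |mat T s r * φ r| := one_mul _
      have h2 : |mat T s r * φ r| = |mat T s r| * ψ r := abs_mul _ _
      simp only [haa]
      linarith [h1, h2 ▸ h1]
    have hasum : Summable a := (srow s).sub ((sφrow s).mul_left (u s))
    have hatsum : ∑' r, a r = 0 := by
      rw [Summable.tsum_sub (srow s) ((sφrow s).mul_left (u s))]
      rw [tsum_mul_left, ← hfix s]
      have h3 : G s = ψ s := (hEq s).symm
      simp only [hG] at h3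
      rw [h3, huφ s]
      ring
    have := Summable.le_tsum hasum t (fun j _ => hann j)
    rw [hatsum] at this
    have h0 : a t = 0 := le_antisymm this (hann t)
    simp only [haa] at h0
    rcases husq' s with hus | hus
    · linear_combination (-(u s)) * h0 - (mat T s t * φ t) * hus
    · rw [hus] at h0
      have habs : |mat T s t| * ψ t = 0 := by linarith
      have h5 : |mat T s t * φ t| = 0 := by rw [abs_mul]; exact habs
      have hmz : mat T s t * φ t = 0 := abs_eq_zero.1 h5
      rw [hmz, hus]
      ring
  -- the max set
  obtain ⟨t₁, ht₁⟩ := hne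
  have hψt₁ : 0 < ψ t₁ := abs_pos.2 ht₁
  obtain ⟨N, hN⟩ : ∃ N, ∀ t ≥ N, ψ t < ψ t₁ := by
    have := hψs.tendsto_atTop_zero
    have h2 := (Metric.tendsto_atTop.1 this) (ψ t₁) hψt₁
    obtain ⟨N, hN⟩ := h2
    exact ⟨N, fun t ht => by
      have := hN t ht
      rw [Real.dist_eq, sub_zero, abs_of_nonneg (hψ0 t)] at this
      exact this⟩
  set Fin0 : Finset ℕ := insert t₁ (Finset.range N) with hFin0
  obtain ⟨t₀, ht₀F, ht₀max⟩ := Finset.exists_max_image Fin0 ψ ⟨t₁, Finset.mem_insert_self _ _⟩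
  set β : ℝ := ψ t₀ with hβdef
  have hβ : 0 < β := lt_of_lt_of_le hψt₁ (ht₀max t₁ (Finset.mem_insert_self _ _))
  have hmax : ∀ t, ψ t ≤ β := by
    intro t
    by_cases h : t ∈ Fin0
    · exact ht₀max t h
    · have : N ≤ t := by
        by_contra h2
        exact h (Finset.mem_insert_of_mem (Finset.mem_range.2 (by omega)))
      exact (hN t this).le.trans (ht₀max t₁ (Finset.mem_insert_self _ _))
  set M : Finset ℕ := Fin0.filter (fun t => ψ t = β) with hM
  have ht₀M : t₀ ∈ M := Finset.mem_filter.2 ⟨ht₀F, rfl⟩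
  have hmem : ∀ t, t ∈ M ↔ ψ t = β := by
    intro t
    constructor
    · intro ht; exact (Finset.mem_filter.1 ht).2
    · intro ht
      refine Finset.mem_filter.2 ⟨?_, ht⟩
      by_contra h
      have : N ≤ t := by
        by_contra h2
        exact h (Finset.mem_insert_of_mem (Finset.mem_range.2 (by omega)))
      have := hN t this
      rw [ht] at this
      exact absurd this (not_lt.2 (ht₀max t₁ (Finset.mem_insert_self _ _)))
  have hφM : ∀ t ∈ M, φ t ≠ 0 := by
    intro t ht
    have : ψ t = β := (hmem t).1 ht
    intro h
    rw [hψdef] at this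
    simp only [h, abs_zero] at this
    exact absurd this.symm (ne_of_gt hβ)
  -- rows from M
  have rowsM : ∀ s ∈ M, (∀ t, t ∉ M → mat T s t = 0) ∧ ∑ t ∈ M, |mat T s t| = 1 := by
    intro s hs
    have hψs' : ψ s = β := (hmem s).1 hs
    set R : ℝ := ∑' t, |mat T s t| with hR
    have hRle : R ≤ 1 := row_tsum_le hT s
    set e : ℕ → ℝ := fun t => |mat T s t| * β - |mat T s t| * ψ t with he
    have henn : ∀ t, 0 ≤ e t :=
      fun t => sub_nonneg.2 (mul_le_mul_of_nonneg_left (hmax t) (abs_nonneg _))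
    have hesum : Summable e := ((row_summable hT s).mul_right β).sub (srow s)
    have hetsum : ∑' t, e t = R * β - β := by
      rw [Summable.tsum_sub ((row_summable hT s).mul_right β) (srow s), tsum_mul_right]
      have h3 : G s = ψ s := (hEq s).symm
      simp only [hG] at h3
      rw [h3, hψs']
    have heRb : R * β - β ≤ 0 := by nlinarith [hβ]
    have hetz : ∑' t, e t = 0 := by
      have h1 : 0 ≤ ∑' t, e t := tsum_nonneg henn
      rw [hetsum] at h1 ⊢
      linarith
    have hez : ∀ t, e t = 0 := by
      intro t
      have := Summable.le_tsum hesum t (fun j _ => henn j)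
      rw [hetz] at this
      exact le_antisymm this (henn t)
    have hRone : R = 1 := by
      rw [hetsum] at hetz
      have h5 : R * β = 1 * β := by linarith
      exact mul_right_cancel₀ (ne_of_gt hβ) h5
    have hzero : ∀ t, t ∉ M → mat T s t = 0 := by
      intro t ht
      have h1 : e t = 0 := hez t
      simp only [he] at h1
      have h2 : |mat T s t| * (β - ψ t) = 0 := by linarith
      rcases mul_eq_zero.1 h2 with h | h
      · exact abs_eq_zero.1 h
      · exfalso
        exact ht ((hmem t).2 (by linarith))
    refine ⟨hzero, ?_⟩
    have : ∑' t, |mat T s t| = ∑ t ∈ M, |mat T s t| :=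
      tsum_eq_sum (fun t ht => by rw [hzero t ht, abs_zero])
    rw [← this, ← hR, hRone]
  -- columns within M
  have colsM : ∀ t ∈ M, ∑ s ∈ M, |mat T s t| = 1 := by
    have hdouble : ∑ s ∈ M, ∑ t ∈ M, |mat T s t| = (M.card : ℝ) := by
      rw [Finset.sum_congr rfl (fun s hs => (rowsM s hs).2)]
      simp
    have hcc : ∑ t ∈ M, ∑ s ∈ M, |mat T s t| = (M.card : ℝ) := by
      rw [← Finset.sum_comm]; exact hdouble
    have hsum0 : ∑ t ∈ M, (1 - ∑ s ∈ M, |mat T s t|) = 0 := by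
      rw [Finset.sum_sub_distrib, hcc]
      simp
    have hnn : ∀ t ∈ M, 0 ≤ 1 - ∑ s ∈ M, |mat T s t| :=
      fun t _ => sub_nonneg.2 (col_sum_le hT t M)
    have := (Finset.sum_eq_zero_iff_of_nonneg hnn).1 hsum0
    intro t ht
    have := this t ht
    linarith
  have colszero : ∀ t ∈ M, ∀ s, s ∉ M → mat T s t = 0 := by
    intro t ht s hs
    have h1 := col_sum_le hT t (insert s M)
    rw [Finset.sum_insert hs, colsM t ht] at h1
    have : |mat T s t| ≤ 0 := by linarith
    exact abs_eq_zero.1 (le_antisymm this (abs_nonneg _))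
  -- the fixed vector z
  set z : ℕ → ℝ := fun r => if r ∈ M then u r else 0 with hz
  have hzsum : z = ∑ t ∈ M, u t • dl t := by
    funext r
    rw [Finset.sum_apply]
    have : ∀ t ∈ M, (u t • dl t) r = if r = t then u t else 0 := by
      intro t _
      simp only [Pi.smul_apply, smul_eq_mul, dl]
      by_cases h : r = t <;> simp [h]
    rw [Finset.sum_congr rfl this, Finset.sum_ite_eq]
  have hzbdd : IsBdd z := by
    refine ⟨1, fun r => ?_⟩
    simp only [hz]
    by_cases h : r ∈ M
    · simp only [if_pos h]; exact huabs r
    · simp [h]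
  have hztend : Tendsto z atTop (nhds 0) := by
    have hev : ∀ᶠ r in atTop, z r = 0 := by
      filter_upwards [eventually_ge_atTop (max N (t₁ + 1))] with r hr
      have hrM : r ∉ M := by
        intro hrm
        have := (Finset.mem_filter.1 hrm).1
        rcases Finset.mem_insert.1 this with h | h
        · have := le_max_right N (t₁ + 1); omega
        · have h2 := Finset.mem_range.1 h
          have := le_max_left N (t₁ + 1); omega
      simp [hz, hrM]
    exact Tendsto.congr' (hev.mono fun s h => h.symm) tendsto_const_nhds
  have hTz : T z = z := by
    have hTz1 : T z = ∑ t ∈ M, u t • T (dl t) := by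
      rw [hzsum, map_sum]
      exact Finset.sum_congr rfl (fun t _ => map_smul T (u t) (dl t))
    funext s
    have hTzs : T z s = ∑ t ∈ M, u t * mat T t s := by
      rw [hTz1, Finset.sum_apply]
      apply Finset.sum_congr rfl
      intro t _
      simp [mat]
    by_cases hsM : s ∈ M
    · have hkey : ∀ t ∈ M, u t * mat T t s = u s * |mat T t s| := by
        intro t ht
        have hal := halign t s
        have hψsβ : ψ s = β := (hmem s).1 hsM
        have hφs : φ s = u s * β := by rw [hφu s (hφM s hsM), hψsβ]
        rw [hφs, hψsβ] at hal
        -- hal : mat T t s * (u s * β) = u t * (|mat T t s| * β)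
        have h2 : mat T t s * u s = u t * |mat T t s| := by
          have h6 : (mat T t s * u s) * β = (u t * |mat T t s|) * β := by
            linear_combination hal
          exact mul_right_cancel₀ (ne_of_gt hβ) h6
        have husq_t := husq t (hφM t ht)
        have husq_s := husq s (hφM s hsM)
        linear_combination (u t * u s) * h2 - (u t * mat T t s) * husq_s +
          (u s * |mat T t s|) * husq_t
      rw [hTzs, Finset.sum_congr rfl hkey, ← Finset.mul_sum, colsM s hsM]
      simp [hz, hsM]
    · have hzero : ∀ t ∈ M, u t * mat T t s = 0 := by
        intro t ht
        rw [(rowsM t ht).1 s hsM, mul_zero]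
      rw [hTzs, Finset.sum_congr rfl hzero]
      simp [hz, hsM]
  refine ⟨z, hzbdd, hztend, hTz, ?_⟩
  have hzt : ∑' t, z t * φ t = ∑ t ∈ M, z t * φ t :=
    tsum_eq_sum (fun t ht => by simp [hz, ht])
  have hzt2 : ∑ t ∈ M, z t * φ t = ∑ t ∈ M, u t * φ t :=
    Finset.sum_congr rfl (fun t ht => by simp [hz, ht])
  rw [hzt, hzt2, Finset.sum_congr rfl (fun t _ => huφ t)]
  have : ∑ t ∈ M, ψ t = (M.card : ℝ) * β := by
    rw [Finset.sum_congr rfl (fun t ht => (hmem t).1 ht), Finset.sum_const]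
    simp [mul_comm]
  rw [this]
  have hcard : 0 < M.card := Finset.card_pos.2 ⟨t₀, ht₀M⟩
  exact mul_pos (by exact_mod_cast hcard) hβ




variable {T : (ℕ → ℝ) →ₗ[ℝ] (ℕ → ℝ)}

lemma isBdd_lin {a b : ℝ} {x y : ℕ → ℝ} (hx : IsBdd x) (hy : IsBdd y) :
    IsBdd (a • x + b • y) := by
  obtain ⟨C, hC⟩ := hx; obtain ⟨D, hD⟩ := hy
  refine ⟨|a| * C + |b| * D, fun s => ?_⟩
  have h1 : (a • x + b • y) s = a * x s + b * y s := rfl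
  rw [h1]
  calc |a * x s + b * y s| ≤ |a * x s| + |b * y s| := abs_add_le _ _
    _ = |a| * |x s| + |b| * |y s| := by rw [abs_mul, abs_mul]
    _ ≤ |a| * C + |b| * D :=
        add_le_add (mul_le_mul_of_nonneg_left (hC s) (abs_nonneg a))
          (mul_le_mul_of_nonneg_left (hD s) (abs_nonneg b))

def Vset (T : (ℕ → ℝ) →ₗ[ℝ] (ℕ → ℝ)) : Set E :=
  {v : E | ∃ f y : ℕ → ℝ, IsBdd f ∧ IsBdd y ∧ T f = f ∧ ∀ s, v s = f s + (y s - T y s)}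

lemma Vset_zero : (0 : E) ∈ Vset T := by
  refine ⟨0, 0, ⟨0, by simp⟩, ⟨0, by simp⟩, map_zero T, fun s => ?_⟩
  simp [map_zero]

lemma Vset_combo (a b : ℝ) {v w : E} (hv : v ∈ Vset T) (hw : w ∈ Vset T) :
    a • v + b • w ∈ Vset T := by
  obtain ⟨f1, y1, hf1, hy1, hTf1, hv1⟩ := hv
  obtain ⟨f2, y2, hf2, hy2, hTf2, hv2⟩ := hw
  refine ⟨a • f1 + b • f2, a • y1 + b • y2, isBdd_lin hf1 hf2, isBdd_lin hy1 hy2, ?_, fun s => ?_⟩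
  · rw [map_add, map_smul, map_smul, hTf1, hTf2]
  · have hc : (a • v + b • w) s = a * v s + b * w s := by
      simp [BoundedContinuousFunction.coe_add, BoundedContinuousFunction.coe_smul]
    have hty : T (a • y1 + b • y2) s = a * T y1 s + b * T y2 s := by
      rw [map_add, map_smul, map_smul]; rfl
    have h1 : (a • f1 + b • f2) s = a * f1 s + b * f2 s := rfl
    have h2 : (a • y1 + b • y2) s = a * y1 s + b * y2 s := rfl
    rw [hc, hv1 s, hv2 s, h1, h2, hty]
    ring

lemma Vset_smul (c : ℝ) {v : E} (hv : v ∈ Vset T) : c • v ∈ Vset T := by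
  have := Vset_combo (T := T) c 0 hv hv
  simpa using this

lemma Vset_convex : Convex ℝ (Vset T) := by
  intro v hv w hw a b _ _ _
  exact Vset_combo a b hv hw

lemma dl_mem_closure (hT : IsDS T) (j : ℕ) : mkE (dl j) ∈ closure (Vset T) := by
  by_contra hnot
  obtain ⟨Λ, u0, hΛV, hΛx⟩ := geometric_hahn_banach_closed_point
    ((Vset_convex (T := T)).closure) isClosed_closure hnot
  have hvan : ∀ v ∈ Vset T, Λ v = 0 := by
    intro v hv
    by_contra hne
    have hlt : ∀ c : ℝ, c * Λ v < u0 := by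
      intro c
      have := hΛV (c • v) (subset_closure (Vset_smul c hv))
      simpa using this
    have h1 := hlt ((|u0| + 1) / Λ v)
    rw [div_mul_cancel₀ _ hne] at h1
    have : u0 ≤ |u0| := le_abs_self u0
    linarith
  have hu0 : 0 < u0 := by
    have := hΛV 0 (subset_closure (Vset_zero (T := T)))
    simpa using this
  set φ : ℕ → ℝ := fun t => Λ (mkE (dl t)) with hφ
  -- ℓ¹ bound for φ
  have hφsumF : ∀ F : Finset ℕ, ∑ t ∈ F, |φ t| ≤ ‖Λ‖ := by
    intro F
    set c : ℕ → ℝ := fun t => if φ t < 0 then (-1:ℝ) else 1 with hc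
    have hcm : ∀ t, c t * φ t = |φ t| := by
      intro t
      rcases lt_or_ge (φ t) 0 with h | h
      · simp [hc, h, abs_of_neg h]
      · simp [hc, not_lt.2 h, abs_of_nonneg h]
    set g : E := ∑ t ∈ F, c t • mkE (dl t) with hg
    have hgval : ∀ r, g r = if r ∈ F then c r else 0 := by
      intro r
      rw [hg]
      rw [show ((∑ t ∈ F, c t • mkE (dl t)) : E) r
          = ∑ t ∈ F, (c t • mkE (dl t)) r by
        rw [BoundedContinuousFunction.coe_sum]; simp [Finset.sum_apply]]
      have : ∀ t ∈ F, (c t • mkE (dl t)) r = if r = t then c t else 0 := by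
        intro t _
        rw [BoundedContinuousFunction.coe_smul]
        simp only [Pi.smul_apply, smul_eq_mul]
        rw [mkE_apply (dl_bdd t) r]
        simp only [dl]
        by_cases h : r = t <;> simp [h]
      rw [Finset.sum_congr rfl this, Finset.sum_ite_eq]
    have hgnorm : ‖g‖ ≤ 1 := by
      refine (BoundedContinuousFunction.norm_le zero_le_one).2 (fun r => ?_)
      rw [Real.norm_eq_abs, hgval r]
      by_cases h : r ∈ F
      · simp only [if_pos h]
        rcases lt_or_ge (φ r) 0 with h' | h'
        · simp [hc, h']
        · simp [hc, not_lt.2 h']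
      · simp [h]
    have hΛg : Λ g = ∑ t ∈ F, |φ t| := by
      rw [hg, map_sum]
      apply Finset.sum_congr rfl
      intro t _
      rw [map_smul]
      simpa using hcm t
    calc ∑ t ∈ F, |φ t| = Λ g := hΛg.symm
      _ ≤ ‖Λ‖ * ‖g‖ := le_trans (le_abs_self _) (by
          have := Λ.le_opNorm g
          rwa [Real.norm_eq_abs] at this)
      _ ≤ ‖Λ‖ * 1 := mul_le_mul_of_nonneg_left hgnorm (norm_nonneg Λ)
      _ = ‖Λ‖ := mul_one _
  have hφsum : Summable (fun t => |φ t|) :=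
    summable_of_sum_le (fun t => abs_nonneg _) hφsumF
  -- representation of Λ on c₀ elements
  have hrep : ∀ w : ℕ → ℝ, Tendsto w atTop (nhds 0) → Λ (mkE w) = ∑' t, w t * φ t := by
    intro w hw
    have hwbdd : IsBdd w := isBdd_of_tendsto hw
    obtain ⟨C, hC⟩ := hwbdd
    set p : ℕ → E := fun N => ∑ t ∈ Finset.range N, w t • mkE (dl t) with hp
    have hΛp : ∀ N, Λ (p N) = ∑ t ∈ Finset.range N, w t * φ t := by
      intro N
      rw [hp, map_sum]
      apply Finset.sum_congr rfl
      intro t _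
      rw [map_smul]; rfl
    have hpval : ∀ N r, p N r = if r ∈ Finset.range N then w r else 0 := by
      intro N r
      rw [hp]
      rw [show ((∑ t ∈ Finset.range N, w t • mkE (dl t)) : E) r
          = ∑ t ∈ Finset.range N, (w t • mkE (dl t)) r by
        rw [BoundedContinuousFunction.coe_sum]; simp [Finset.sum_apply]]
      have : ∀ t ∈ Finset.range N, (w t • mkE (dl t)) r = if r = t then w t else 0 := by
        intro t _
        rw [BoundedContinuousFunction.coe_smul]
        simp only [Pi.smul_apply, smul_eq_mul]
        rw [mkE_apply (dl_bdd t) r]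
        simp only [dl]
        by_cases h : r = t <;> simp [h]
      rw [Finset.sum_congr rfl this, Finset.sum_ite_eq]
    have htend : Tendsto p atTop (nhds (mkE w)) := by
      rw [Metric.tendsto_atTop]
      intro ε hε
      obtain ⟨N₀, hN₀⟩ := (Metric.tendsto_atTop.1 hw) (ε/2) (by linarith)
      refine ⟨N₀, fun N hN => ?_⟩
      rw [dist_eq_norm]
      have hle : ‖p N - mkE w‖ ≤ ε/2 := by
        refine (BoundedContinuousFunction.norm_le (by linarith)).2 (fun r => ?_)
        rw [Real.norm_eq_abs]
        have : (p N - mkE w) r = p N r - w r := by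
          rw [BoundedContinuousFunction.coe_sub]
          simp only [Pi.sub_apply]
          rw [mkE_apply (isBdd_of_tendsto hw) r]
        rw [this, hpval N r]
        by_cases h : r ∈ Finset.range N
        · simp [h]; linarith
        · simp only [if_neg h, zero_sub, abs_neg]
          have hrN : N ≤ r := by
            by_contra h2
            exact h (Finset.mem_range.2 (by omega))
          have := hN₀ r (le_trans hN hrN)
          rw [Real.dist_eq, sub_zero] at this
          linarith
      linarith
    have hcont : Tendsto (fun N => Λ (p N)) atTop (nhds (Λ (mkE w))) :=
      (Λ.continuous.tendsto _).comp htend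
    have hsum2 : Summable (fun t => w t * φ t) := by
      refine Summable.of_abs ?_
      refine Summable.of_nonneg_of_le (fun t => abs_nonneg _) (fun t => ?_)
        (hφsum.mul_left C)
      rw [abs_mul]
      exact mul_le_mul_of_nonneg_right (hC t) (abs_nonneg _)
    have hps : Tendsto (fun N => ∑ t ∈ Finset.range N, w t * φ t) atTop
        (nhds (∑' t, w t * φ t)) := hsum2.hasSum.tendsto_sum_nat
    have := hcont
    rw [show (fun N => Λ (p N)) = fun N => ∑ t ∈ Finset.range N, w t * φ t from
      funext hΛp] at this
    exact tendsto_nhds_unique this hps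
  -- the fixed-point equation for φ
  have hfixφ : ∀ s, φ s = ∑' t, mat T s t * φ t := by
    intro s
    have hTdlb : IsBdd (T (dl s)) := (hT.2 (dl s) (dl_bdd s)).1
    set vs : E := mkE (dl s) - mkE (T (dl s)) with hvs
    have hvmem : vs ∈ Vset T := by
      refine ⟨0, dl s, ⟨0, by simp⟩, dl_bdd s, map_zero T, fun r => ?_⟩
      rw [hvs, BoundedContinuousFunction.coe_sub]
      simp only [Pi.sub_apply]
      rw [mkE_apply (dl_bdd s) r, mkE_apply hTdlb r]
      simp
    have h0 := hvan vs hvmem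
    rw [hvs, map_sub] at h0
    have h1 : Λ (mkE (T (dl s))) = ∑' t, T (dl s) t * φ t := hrep _ (Tdl_tendsto hT s)
    have h2 : φ s = Λ (mkE (T (dl s))) := by
      rw [hφ]
      simp only []
      linarith
    rw [h2, h1]
    rfl
  -- apply the key lemma and derive the contradiction
  have hφj : φ j ≠ 0 := by
    have : u0 < φ j := hΛx
    intro h; rw [h] at this; linarith
  obtain ⟨z, hzbdd, hztend, hTz, hzpos⟩ := lemK hT φ hφsum hfixφ ⟨j, hφj⟩
  have hzmem : mkE z ∈ Vset T := by
    refine ⟨z, 0, hzbdd, ⟨0, by simp⟩, hTz, fun s => ?_⟩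
    rw [mkE_apply hzbdd s]
    simp [map_zero]
  have h0 := hvan _ hzmem
  have h1 : Λ (mkE z) = ∑' t, z t * φ t := hrep z hztend
  rw [h0] at h1
  linarith



lemma Vset_exists {T : (ℕ → ℝ) →ₗ[ℝ] (ℕ → ℝ)} (hT : IsDS T) (j : ℕ) :
    ∀ ε > 0, ∃ f y : ℕ → ℝ, IsBdd f ∧ IsBdd y ∧ T f = f ∧
      supNorm (fun s => dl j s - (f s + (y s - T y s))) ≤ ε := by
  intro ε hε
  have hm := dl_mem_closure hT j
  rw [Metric.mem_closure_iff] at hm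
  obtain ⟨v, hv, hdist⟩ := hm ε hε
  obtain ⟨f, y, hf, hy, hTf, hval⟩ := hv
  refine ⟨f, y, hf, hy, hTf, ?_⟩
  have h1 : (fun s => dl j s - (f s + (y s - T y s))) = fun s => dl j s - v s := by
    funext s; rw [hval s]
  rw [h1, supNorm_sub_eq (dl_bdd j) v, ← dist_eq_norm]
  exact hdist.le

variable {T : (ℕ → ℝ) →ₗ[ℝ] (ℕ → ℝ)}

/-- the notion of success: Cesàro averages converge uniformly to an element of `c₀` -/
def Good (T : (ℕ → ℝ) →ₗ[ℝ] (ℕ → ℝ)) (x : ℕ → ℝ) : Prop :=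
  ∃ L : E, Tendsto (fun n => ‖mkE (cesaro T n x) - L‖) atTop (nhds 0) ∧
    Tendsto (⇑L) atTop (nhds 0)

lemma norm_mkE_sub_mkE_le (hT : IsDS T) {x g : ℕ → ℝ} (hx : IsBdd x) (hg : IsBdd g)
    (n : ℕ) :
    ‖mkE (cesaro T n x) - mkE (cesaro T n g)‖ ≤ supNorm (fun s => x s - g s) := by
  refine (BoundedContinuousFunction.norm_le (supNorm_nonneg _)).2 (fun r => ?_)
  rw [Real.norm_eq_abs]
  have h1 : (mkE (cesaro T n x) - mkE (cesaro T n g)) r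
      = cesaro T n x r - cesaro T n g r := by
    rw [BoundedContinuousFunction.coe_sub]
    simp only [Pi.sub_apply]
    rw [mkE_apply (cesaro_bdd hT hx n) r, mkE_apply (cesaro_bdd hT hg n) r]
  rw [h1]
  have h2 : cesaro T n x r - cesaro T n g r = cesaro T n (x - g) r := by
    rw [cesaro_sub]; rfl
  rw [h2]
  have h3 : IsBdd (x - g) := isBdd_sub hx hg
  exact cesaro_abs_le hT h3 n r

lemma dist_to_fix (hT : IsDS T) {x f y : ℕ → ℝ} (hx : IsBdd x) (hf : IsBdd f)
    (hy : IsBdd y) (hTf : T f = f) {n : ℕ} (hn : n ≠ 0) :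
    ‖mkE (cesaro T n x) - mkE f‖
      ≤ supNorm (fun s => x s - (f s + (y s - T y s))) + 2 * supNorm y / n := by
  have hv : IsBdd (fun s => f s + (y s - T y s)) :=
    isBdd_add hf (isBdd_sub hy (hT.2 y hy).1)
  refine (BoundedContinuousFunction.norm_le ?_).2 (fun r => ?_)
  · have h1 := supNorm_nonneg (fun s => x s - (f s + (y s - T y s)))
    have h2 : (0:ℝ) ≤ 2 * supNorm y / n := by
      apply div_nonneg
      · linarith [supNorm_nonneg y]
      · exact Nat.cast_nonneg n
    linarith
  rw [Real.norm_eq_abs]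
  have h1 : (mkE (cesaro T n x) - mkE f) r = cesaro T n x r - f r := by
    rw [BoundedContinuousFunction.coe_sub]
    simp only [Pi.sub_apply]
    rw [mkE_apply (cesaro_bdd hT hx n) r, mkE_apply hf r]
  rw [h1]
  set v : ℕ → ℝ := fun s => f s + (y s - T y s) with hvdef
  have hvv : v = f + (y - T y) := rfl
  have h2 : cesaro T n x r - f r
      = cesaro T n (x - v) r + cesaro T n (y - T y) r := by
    have e1 : cesaro T n (x - v) r = cesaro T n x r - cesaro T n v r := by
      rw [cesaro_sub]; rfl
    have e2 : cesaro T n v r = f r + cesaro T n (y - T y) r := by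
      rw [hvv, cesaro_add, cesaro_fix hTf hn]; rfl
    rw [e1, e2]; ring
  rw [h2]
  calc |cesaro T n (x - v) r + cesaro T n (y - T y) r|
      ≤ |cesaro T n (x - v) r| + |cesaro T n (y - T y) r| := abs_add_le _ _
    _ ≤ supNorm (fun s => x s - v s) + 2 * supNorm y / n :=
        add_le_add (cesaro_abs_le hT (isBdd_sub hx hv) n r) (cesaro_cobound_bound hT hy n r)

lemma cauchy_of_approx (hT : IsDS T) {x : ℕ → ℝ} (hx : IsBdd x)
    (happ : ∀ ε > 0, ∃ f y : ℕ → ℝ, IsBdd f ∧ IsBdd y ∧ T f = f ∧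
      supNorm (fun s => x s - (f s + (y s - T y s))) ≤ ε) :
    ∃ L : E, Tendsto (fun n => ‖mkE (cesaro T n x) - L‖) atTop (nhds 0) := by
  have hcauchy : CauchySeq (fun n => mkE (cesaro T n x)) := by
    rw [Metric.cauchySeq_iff]
    intro ε hε
    obtain ⟨f, y, hf, hy, hTf, hsn⟩ := happ (ε/4) (by linarith)
    have htd : Tendsto (fun n : ℕ => 2 * supNorm y / n) atTop (nhds 0) :=
      tendsto_const_div_atTop_nhds_zero_nat _
    obtain ⟨N₁, hN₁⟩ := (Metric.tendsto_atTop.1 htd) (ε/8) (by linarith)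
    refine ⟨max N₁ 1, fun m hm n hn => ?_⟩
    have hb : ∀ k : ℕ, k ≥ max N₁ 1 → ‖mkE (cesaro T k x) - mkE f‖ ≤ ε/4 + ε/8 := by
      intro k hk
      have hk1 : k ≠ 0 := by
        have := le_trans (le_max_right N₁ 1) hk; omega
      have := dist_to_fix hT hx hf hy hTf hk1
      have h2 : 2 * supNorm y / k ≤ ε/8 := by
        have := hN₁ k (le_trans (le_max_left N₁ 1) hk)
        rw [Real.dist_eq, sub_zero] at this
        have h3 : (0:ℝ) ≤ 2 * supNorm y / k := by
          apply div_nonneg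
          · linarith [supNorm_nonneg y]
          · exact Nat.cast_nonneg k
        rw [abs_of_nonneg h3] at this
        linarith
      linarith
    have h1 := hb m hm
    have h2 := hb n hn
    rw [dist_eq_norm]
    calc ‖mkE (cesaro T m x) - mkE (cesaro T n x)‖
        ≤ ‖mkE (cesaro T m x) - mkE f‖ + ‖mkE f - mkE (cesaro T n x)‖ :=
          norm_sub_le_norm_sub_add_norm_sub _ _ _
      _ ≤ (ε/4 + ε/8) + (ε/4 + ε/8) := by
          rw [norm_sub_rev (mkE f)]
          linarith
      _ < ε := by linarith
  obtain ⟨L, hL⟩ := cauchySeq_tendsto_of_complete hcauchy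
  exact ⟨L, tendsto_iff_norm_sub_tendsto_zero.1 hL⟩

lemma good_dl (hT : IsDS T) (j : ℕ) : Good T (dl j) := by
  obtain ⟨L, hL⟩ := cauchy_of_approx hT (dl_bdd j) (Vset_exists hT j)
  refine ⟨L, hL, ?_⟩
  -- every Cesàro average of `dl j` is in c₀
  have hiter_sum : ∀ k, Summable (fun t => |(⇑T)^[k] (dl j) t|) := by
    intro k
    induction k with
    | zero =>
      simpa using summable_of_ne_finset_zero (s := ({j} : Finset ℕ))
        (f := fun t => |dl j t|) (by
          intro t ht
          simp only [Finset.mem_singleton] at ht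
          simp [dl, ht])
    | succ k ih =>
      rw [Function.iterate_succ_apply']
      exact (hT.1 _ ih).1
  have htend0 : ∀ n, Tendsto (cesaro T n (dl j)) atTop (nhds 0) := by
    intro n
    have h1 : Tendsto (fun s => ∑ k ∈ Finset.range n, (⇑T)^[k] (dl j) s) atTop
        (nhds (∑ k ∈ Finset.range n, (0:ℝ))) := by
      apply tendsto_finset_sum
      intro k _
      exact (Summable.of_abs (hiter_sum k)).tendsto_atTop_zero
    rw [Finset.sum_const_zero] at h1
    have h2 := h1.div_const (n : ℝ)
    rw [zero_div] at h2
    exact h2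
  -- conclude L tends to zero
  rw [Metric.tendsto_atTop]
  intro ε hε
  obtain ⟨n₀, hn₀⟩ := (Metric.tendsto_atTop.1 hL) (ε/2) (by linarith)
  have hnorm := hn₀ n₀ le_rfl
  rw [Real.dist_eq, sub_zero] at hnorm
  have hnorm' : ‖mkE (cesaro T n₀ (dl j)) - L‖ < ε/2 :=
    lt_of_le_of_lt (le_abs_self _) hnorm
  obtain ⟨N, hN⟩ := (Metric.tendsto_atTop.1 (htend0 n₀)) (ε/2) (by linarith)
  refine ⟨N, fun s hs => ?_⟩
  rw [Real.dist_eq, sub_zero]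
  have h1 : |L s - cesaro T n₀ (dl j) s| ≤ ‖mkE (cesaro T n₀ (dl j)) - L‖ := by
    have h2 : (mkE (cesaro T n₀ (dl j)) - L) s = cesaro T n₀ (dl j) s - L s := by
      rw [BoundedContinuousFunction.coe_sub]
      simp only [Pi.sub_apply]
      rw [mkE_apply (cesaro_bdd hT (dl_bdd j) n₀) s]
    have h3 := (mkE (cesaro T n₀ (dl j)) - L).norm_coe_le_norm s
    rw [h2, Real.norm_eq_abs] at h3
    rw [abs_sub_comm]
    exact h3
  have h4 := hN s hs
  rw [Real.dist_eq, sub_zero] at h4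
  calc |L s| ≤ |L s - cesaro T n₀ (dl j) s| + |cesaro T n₀ (dl j) s| := by
        have := abs_add_le (L s - cesaro T n₀ (dl j) s) (cesaro T n₀ (dl j) s)
        simpa using this
    _ < ε/2 + ε/2 := add_lt_add_of_le_of_lt (le_trans h1 hnorm'.le) h4
    _ = ε := by ring

lemma good_smul (hT : IsDS T) {x : ℕ → ℝ} (hx : IsBdd x) (c : ℝ) (hgood : Good T x) :
    Good T (c • x) := by
  obtain ⟨L, hL1, hL2⟩ := hgood
  have hcx : IsBdd (c • x) := by
    obtain ⟨C, hC⟩ := hx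
    exact ⟨|c| * C, fun s => by
      have : (c • x) s = c * x s := rfl
      rw [this, abs_mul]
      exact mul_le_mul_of_nonneg_left (hC s) (abs_nonneg c)⟩
  refine ⟨c • L, ?_, ?_⟩
  · have hkey : ∀ n, ‖mkE (cesaro T n (c • x)) - c • L‖
        = |c| * ‖mkE (cesaro T n x) - L‖ := by
      intro n
      have h1 : mkE (cesaro T n (c • x)) = c • mkE (cesaro T n x) := by
        apply BoundedContinuousFunction.ext
        intro s
        rw [mkE_apply (cesaro_bdd hT hcx n) s]
        rw [BoundedContinuousFunction.coe_smul]
        simp only [Pi.smul_apply, smul_eq_mul]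
        rw [mkE_apply (cesaro_bdd hT hx n) s, cesaro_smul]
        rfl
      rw [h1]
      rw [show c • mkE (cesaro T n x) - c • L = c • (mkE (cesaro T n x) - L) from
        (smul_sub c _ _).symm]
      rw [norm_smul c (mkE (cesaro T n x) - L), Real.norm_eq_abs]
    rw [show (fun n => ‖mkE (cesaro T n (c • x)) - c • L‖)
        = fun n => |c| * ‖mkE (cesaro T n x) - L‖ from funext hkey]
    have := hL1.const_mul |c|
    simpa using this
  · have : ⇑(c • L) = fun s => c * L s := by
      rw [BoundedContinuousFunction.coe_smul]; rfl
    rw [this]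
    have := hL2.const_mul c
    simpa using this

lemma good_add (hT : IsDS T) {x y : ℕ → ℝ} (hx : IsBdd x) (hy : IsBdd y)
    (hgx : Good T x) (hgy : Good T y) : Good T (x + y) := by
  obtain ⟨L1, h11, h12⟩ := hgx
  obtain ⟨L2, h21, h22⟩ := hgy
  have hxy : IsBdd (x + y) := isBdd_add hx hy
  refine ⟨L1 + L2, ?_, ?_⟩
  · have hkey : ∀ n, ‖mkE (cesaro T n (x + y)) - (L1 + L2)‖
        ≤ ‖mkE (cesaro T n x) - L1‖ + ‖mkE (cesaro T n y) - L2‖ := by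
      intro n
      have h1 : mkE (cesaro T n (x + y)) = mkE (cesaro T n x) + mkE (cesaro T n y) := by
        apply BoundedContinuousFunction.ext
        intro s
        rw [mkE_apply (cesaro_bdd hT hxy n) s]
        rw [BoundedContinuousFunction.coe_add]
        simp only [Pi.add_apply]
        rw [mkE_apply (cesaro_bdd hT hx n) s, mkE_apply (cesaro_bdd hT hy n) s,
          cesaro_add]
        rfl
      rw [h1]
      have : mkE (cesaro T n x) + mkE (cesaro T n y) - (L1 + L2)
          = (mkE (cesaro T n x) - L1) + (mkE (cesaro T n y) - L2) := by ring
      rw [this]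
      exact norm_add_le _ _
    refine squeeze_zero (fun n => norm_nonneg _) hkey ?_
    have := h11.add h21
    simpa using this
  · have : ⇑(L1 + L2) = fun s => L1 s + L2 s := by
      rw [BoundedContinuousFunction.coe_add]; rfl
    rw [this]
    have := h12.add h22
    simpa using this

lemma sumdl_val (w : ℕ → ℝ) (F : Finset ℕ) (r : ℕ) :
    (∑ j ∈ F, w j • dl j) r = if r ∈ F then w r else 0 := by
  rw [Finset.sum_apply]
  have : ∀ t ∈ F, (w t • dl t) r = if r = t then w t else 0 := by
    intro t _
    simp only [Pi.smul_apply, smul_eq_mul, dl]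
    by_cases h : r = t <;> simp [h]
  rw [Finset.sum_congr rfl this, Finset.sum_ite_eq]

lemma good_zero (hT : IsDS T) : Good T (0 : ℕ → ℝ) := by
  have h0 : IsBdd (0 : ℕ → ℝ) := ⟨0, by simp⟩
  have hiter : ∀ k, (⇑T)^[k] (0 : ℕ → ℝ) = 0 := by
    intro k
    induction k with
    | zero => rfl
    | succ k ih => rw [Function.iterate_succ_apply', ih, map_zero]
  have hces : ∀ n, cesaro T n (0 : ℕ → ℝ) = 0 := by
    intro n
    funext s
    simp [cesaro, hiter]
  refine ⟨0, ?_, ?_⟩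
  · have : ∀ n, ‖mkE (cesaro T n (0 : ℕ → ℝ)) - 0‖ = 0 := by
      intro n
      rw [hces n, sub_zero]
      have : mkE (0 : ℕ → ℝ) = 0 := by
        apply BoundedContinuousFunction.ext
        intro s
        rw [mkE_apply h0 s]
        rfl
      rw [this, norm_zero]
    rw [show (fun n => ‖mkE (cesaro T n (0:ℕ→ℝ)) - 0‖) = fun _ => (0:ℝ) from funext this]
    exact tendsto_const_nhds
  · have : ⇑(0 : E) = fun _ => (0:ℝ) := rfl
    rw [this]
    exact tendsto_const_nhds

lemma good_finsum (hT : IsDS T) (w : ℕ → ℝ) (F : Finset ℕ) :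
    Good T (∑ j ∈ F, w j • dl j) := by
  classical
  induction F using Finset.induction with
  | empty => simpa using good_zero hT
  | insert _ _ hnotmem _ =>
    rename_i a s ih
    rw [Finset.sum_insert hnotmem]
    have hb1 : IsBdd (w a • dl a) := by
      obtain ⟨C, hC⟩ := dl_bdd a
      exact ⟨|w a| * C, fun r => by
        have : (w a • dl a) r = w a * dl a r := rfl
        rw [this, abs_mul]
        exact mul_le_mul_of_nonneg_left (hC r) (abs_nonneg _)⟩
    have hb2 : IsBdd (∑ j ∈ s, w j • dl j) := by
      refine ⟨∑ j ∈ s, |w j|, fun r => ?_⟩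
      rw [sumdl_val]
      by_cases h : r ∈ s
      · rw [if_pos h]
        exact Finset.single_le_sum (f := fun j => |w j|) (fun i _ => abs_nonneg _) h
      · rw [if_neg h]
        simpa using Finset.sum_nonneg (fun i _ => abs_nonneg (w i))
    exact good_add hT hb1 hb2 (good_smul hT (dl_bdd a) (w a) (good_dl hT a)) ih




variable {T : (ℕ → ℝ) →ₗ[ℝ] (ℕ → ℝ)}

lemma approx_c0 (hT : IsDS T) {x : ℕ → ℝ} (hx : Tendsto x atTop (nhds 0)) :
    ∀ ε > 0, ∃ g : ℕ → ℝ, IsBdd g ∧ Good T g ∧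
      ∀ n, ‖mkE (cesaro T n x) - mkE (cesaro T n g)‖ ≤ ε := by
  intro ε hε
  have hxb : IsBdd x := isBdd_of_tendsto hx
  obtain ⟨N, hN⟩ := (Metric.tendsto_atTop.1 hx) ε hε
  refine ⟨∑ j ∈ Finset.range N, x j • dl j, ?_, good_finsum hT x (Finset.range N), ?_⟩
  · refine ⟨∑ j ∈ Finset.range N, |x j|, fun r => ?_⟩
    rw [sumdl_val]
    by_cases h : r ∈ Finset.range N
    · rw [if_pos h]
      exact Finset.single_le_sum (f := fun j => |x j|) (fun i _ => abs_nonneg _) h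
    · rw [if_neg h]
      simpa using Finset.sum_nonneg (fun i _ => abs_nonneg (x i))
  · set g : ℕ → ℝ := ∑ j ∈ Finset.range N, x j • dl j with hg
    have hgb : IsBdd g := by
      refine ⟨∑ j ∈ Finset.range N, |x j|, fun r => ?_⟩
      rw [hg, sumdl_val]
      by_cases h : r ∈ Finset.range N
      · rw [if_pos h]
        exact Finset.single_le_sum (f := fun j => |x j|) (fun i _ => abs_nonneg _) h
      · rw [if_neg h]
        simpa using Finset.sum_nonneg (fun i _ => abs_nonneg (x i))
    intro n
    refine le_trans (norm_mkE_sub_mkE_le hT hxb hgb n) (supNorm_le hε.le (fun s => ?_))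
    rw [hg, sumdl_val]
    by_cases h : s ∈ Finset.range N
    · rw [if_pos h]; simpa using hε.le
    · rw [if_neg h]
      have hsN : N ≤ s := by
        by_contra h2
        exact h (Finset.mem_range.2 (by omega))
      have := hN s hsN
      rw [Real.dist_eq, sub_zero] at this
      simpa using this.le

lemma good_c0 (hT : IsDS T) {x : ℕ → ℝ} (hx : Tendsto x atTop (nhds 0)) :
    Good T x := by
  have hxb : IsBdd x := isBdd_of_tendsto hx
  set A : ℕ → E := fun n => mkE (cesaro T n x) with hA
  have hcauchy : CauchySeq A := by
    rw [Metric.cauchySeq_iff]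
    intro ε hε
    obtain ⟨g, hgb, ⟨Lg, hg1, _⟩, hclose⟩ := approx_c0 hT hx (ε/8) (by linarith)
    obtain ⟨N₂, hN₂⟩ := (Metric.tendsto_atTop.1 hg1) (ε/8) (by linarith)
    refine ⟨N₂, fun m hm n hn => ?_⟩
    have hb : ∀ k, k ≥ N₂ → ‖A k - Lg‖ ≤ ε/4 := by
      intro k hk
      have h1 := hclose k
      have h2 := hN₂ k hk
      rw [Real.dist_eq, sub_zero] at h2
      have h2' : ‖mkE (cesaro T k g) - Lg‖ ≤ ε/8 :=
        le_trans (le_abs_self _) h2.le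
      calc ‖A k - Lg‖ ≤ ‖A k - mkE (cesaro T k g)‖ + ‖mkE (cesaro T k g) - Lg‖ :=
            norm_sub_le_norm_sub_add_norm_sub _ _ _
        _ ≤ ε/8 + ε/8 := add_le_add h1 h2'
        _ = ε/4 := by ring
    rw [dist_eq_norm]
    calc ‖A m - A n‖ ≤ ‖A m - Lg‖ + ‖Lg - A n‖ := norm_sub_le_norm_sub_add_norm_sub _ _ _
      _ ≤ ε/4 + ε/4 := by
          rw [norm_sub_rev Lg]
          exact add_le_add (hb m hm) (hb n hn)
      _ < ε := by linarith
  obtain ⟨L, hL⟩ := cauchySeq_tendsto_of_complete hcauchy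
  have hAn : Tendsto (fun n => ‖A n - L‖) atTop (nhds 0) :=
    tendsto_iff_norm_sub_tendsto_zero.1 hL
  refine ⟨L, hAn, ?_⟩
  rw [Metric.tendsto_atTop]
  intro ε hε
  obtain ⟨g, hgb, ⟨Lg, hg1, hg2⟩, hclose⟩ := approx_c0 hT hx (ε/4) (by linarith)
  have hbnd : ∀ n, ‖L - Lg‖ ≤ ‖A n - L‖ + (ε/4 + ‖mkE (cesaro T n g) - Lg‖) := by
    intro n
    calc ‖L - Lg‖ ≤ ‖L - A n‖ + ‖A n - Lg‖ := norm_sub_le_norm_sub_add_norm_sub _ _ _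
      _ ≤ ‖L - A n‖ + (‖A n - mkE (cesaro T n g)‖ + ‖mkE (cesaro T n g) - Lg‖) :=
          add_le_add_right (norm_sub_le_norm_sub_add_norm_sub _ _ _) _
      _ ≤ ‖A n - L‖ + (ε/4 + ‖mkE (cesaro T n g) - Lg‖) := by
          rw [norm_sub_rev L]
          exact add_le_add_right (add_le_add_left (hclose n) _) _
  have htl : Tendsto (fun n => ‖A n - L‖ + (ε/4 + ‖mkE (cesaro T n g) - Lg‖)) atTop
      (nhds (0 + (ε/4 + 0))) :=
    hAn.add (tendsto_const_nhds.add hg1)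
  have hLLg : ‖L - Lg‖ ≤ ε/4 := by
    have := ge_of_tendsto' htl hbnd
    simpa using this
  obtain ⟨N₃, hN₃⟩ := (Metric.tendsto_atTop.1 hg2) (ε/2) (by linarith)
  refine ⟨N₃, fun s hs => ?_⟩
  rw [Real.dist_eq, sub_zero]
  have h1 : |L s - Lg s| ≤ ‖L - Lg‖ := by
    have h2 := (L - Lg).norm_coe_le_norm s
    rw [BoundedContinuousFunction.coe_sub] at h2
    simp only [Pi.sub_apply, Real.norm_eq_abs] at h2
    exact h2
  have h3 := hN₃ s hs
  rw [Real.dist_eq, sub_zero] at h3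
  calc |L s| ≤ |L s - Lg s| + |Lg s| := by
        have := abs_add_le (L s - Lg s) (Lg s)
        simpa using this
    _ < ε/4 + ε/2 := add_lt_add_of_le_of_lt (h1.trans hLLg) h3
    _ < ε := by linarith

theorem main (hT : IsDS T) (x : ℕ → ℝ) (hx : Tendsto x atTop (nhds 0)) :
    ∃ x' : ℕ → ℝ, Tendsto x' atTop (nhds 0) ∧
      Tendsto (fun n => supNorm (fun s => cesaro T n x s - x' s)) atTop (nhds 0) := by
  obtain ⟨L, hL1, hL2⟩ := good_c0 hT hx
  refine ⟨⇑L, hL2, ?_⟩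
  have hxb : IsBdd x := isBdd_of_tendsto hx
  have : (fun n => supNorm (fun s => cesaro T n x s - L s))
      = fun n => ‖mkE (cesaro T n x) - L‖ := by
    funext n
    exact supNorm_sub_eq (cesaro_bdd hT hxb n) L
  rw [this]
  exact hL1


end ET

/-- Individual ergodic theorem in `c₀`: for a Dunford–Schwartz operator `T` and
`x ∈ c₀`, the Cesàro averages converge in the supremum norm to some `x̂ ∈ c₀`. -/
theorem stmt10 (T : (ℕ → ℝ) →ₗ[ℝ] (ℕ → ℝ)) (hT : IsDS T)
    (x : ℕ → ℝ) (hx : Tendsto x atTop (nhds 0)) :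
    ∃ x' : ℕ → ℝ, Tendsto x' atTop (nhds 0) ∧
      Tendsto (fun n => supNorm (fun s => cesaro T n x s - x' s)) atTop (nhds 0) :=
  ET.main hT x hx
end
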